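/- arXiv:1008.2830 — 6 statements merged into one kernel-verified Lean document; each statement's English description precedes it below -/
import Mathlib

section
/- Define a(r) = (2θ(r) − 2β(r))/(4π) where θ(r) = 2·arctan(tan(πα)·√(1−r²)) and β(r) = 2r·sin(πα)·arctan(√(1−r²)/(r·cos(πα))), for 0 < r < 1 and 0 < α < 1/2. Then a''(r) = sin(2πα) / (π·√(1−r²)·(2 − r²·sin(2πα)²))-type expression is positive, and in particular a is convex on (0,1), so a(r) ≥ a(0) + r·a'(0) + (r²/2)·a''(0) = α − (r/2)·sin(πα) + (r²/(4π))·sin(2πα). -/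
open Real

private lemma wedge_hasDerivAt (α : ℝ) (hα0 : 0 < α) (hα : α < 1 / 2) {r : ℝ}
    (hr : r ∈ Set.Ioo (0:ℝ) 1) :
    HasDerivAt (fun r => (2 * (2 * arctan (tan (π * α) * Real.sqrt (1 - r ^ 2))) -
        2 * (2 * r * sin (π * α) * arctan (Real.sqrt (1 - r ^ 2) / (r * cos (π * α))))) / (4 * π))
      (-(sin (π * α) / π) * arctan (Real.sqrt (1 - r ^ 2) / (r * cos (π * α)))) r := by
  obtain ⟨hr0, hr1⟩ := hr
  have hπα0 : 0 < π * α := mul_pos pi_pos hα0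
  have hπα2 : π * α < π / 2 := by nlinarith [pi_pos]
  have hc : 0 < cos (π * α) := cos_pos_of_mem_Ioo ⟨by linarith, hπα2⟩
  have hS : 0 < sin (π * α) := sin_pos_of_pos_of_lt_pi hπα0 (by linarith [pi_pos])
  have h1r : (0:ℝ) < 1 - r ^ 2 := by nlinarith
  set s := Real.sqrt (1 - r ^ 2) with hsdef
  have hs : 0 < s := Real.sqrt_pos.mpr h1r
  have hs2 : s ^ 2 = 1 - r ^ 2 := Real.sq_sqrt h1r.le
  have d1 : HasDerivAt (fun r : ℝ => 1 - r ^ 2) (-(2 * r)) r := by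
    simpa using (hasDerivAt_pow 2 r).const_sub 1
  have dsq : HasDerivAt (fun r : ℝ => Real.sqrt (1 - r ^ 2)) (1 / (2 * s) * -(2 * r)) r :=
    (Real.hasDerivAt_sqrt h1r.ne').comp r d1
  have dθi : HasDerivAt (fun r : ℝ => tan (π * α) * Real.sqrt (1 - r ^ 2))
      (tan (π * α) * (1 / (2 * s) * -(2 * r))) r := dsq.const_mul _
  have dθ : HasDerivAt (fun r : ℝ => 2 * arctan (tan (π * α) * Real.sqrt (1 - r ^ 2)))
      (2 * (1 / (1 + (tan (π * α) * s) ^ 2) * (tan (π * α) * (1 / (2 * s) * -(2 * r))))) r :=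
    ((Real.hasDerivAt_arctan _).comp r dθi).const_mul 2
  have drc : HasDerivAt (fun r : ℝ => r * cos (π * α)) (cos (π * α)) r := by
    simpa using (hasDerivAt_id r).mul_const (cos (π * α))
  have hrc : r * cos (π * α) ≠ 0 := (mul_pos hr0 hc).ne'
  have dq : HasDerivAt (fun r : ℝ => Real.sqrt (1 - r ^ 2) / (r * cos (π * α)))
      ((1 / (2 * s) * -(2 * r) * (r * cos (π * α)) - s * cos (π * α)) / (r * cos (π * α)) ^ 2) r :=
    dsq.div drc hrc
  have darc : HasDerivAt (fun r : ℝ => arctan (Real.sqrt (1 - r ^ 2) / (r * cos (π * α))))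
      (1 / (1 + (s / (r * cos (π * α))) ^ 2) *
        ((1 / (2 * s) * -(2 * r) * (r * cos (π * α)) - s * cos (π * α)) / (r * cos (π * α)) ^ 2)) r :=
    (Real.hasDerivAt_arctan _).comp r dq
  have dlin : HasDerivAt (fun r : ℝ => 2 * r * sin (π * α)) (2 * sin (π * α)) r := by
    simpa using ((hasDerivAt_id r).const_mul 2).mul_const (sin (π * α))
  have dβ : HasDerivAt (fun r : ℝ => 2 * r * sin (π * α) *
        arctan (Real.sqrt (1 - r ^ 2) / (r * cos (π * α))))
      (2 * sin (π * α) * arctan (s / (r * cos (π * α))) + 2 * r * sin (π * α) *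
        (1 / (1 + (s / (r * cos (π * α))) ^ 2) *
          ((1 / (2 * s) * -(2 * r) * (r * cos (π * α)) - s * cos (π * α)) / (r * cos (π * α)) ^ 2))) r := by
    simpa [Pi.mul_def] using dlin.mul darc
  have dall := ((dθ.const_mul 2).sub (dβ.const_mul 2)).div_const (4 * π)
  refine dall.congr_deriv ?_
  symm
  rw [Real.tan_eq_sin_div_cos]
  set A := arctan (s / (r * cos (π * α)))
  set c := cos (π * α)
  set S := sin (π * α)
  have h2 : S ^ 2 + c ^ 2 = 1 := sin_sq_add_cos_sq _
  have hd1 : 1 + (S / c * s) ^ 2 ≠ 0 := by positivity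
  have hd2 : 1 + (s / (r * c)) ^ 2 ≠ 0 := by positivity
  field_simp
  linear_combination (-4*s^2*c*r*S^2) * hs2 + (-4*s^2*c*r) * h2

/-- Key pointwise inequality: `arctan(√(1-r²)/(r·cos)) ≤ π/2 - r·cos` for `0 < r < 1`. -/
private lemma wedge_arctan_le (α : ℝ) (hα0 : 0 < α) (hα : α < 1 / 2) {r : ℝ}
    (hr0 : 0 < r) (hr1 : r < 1) :
    arctan (Real.sqrt (1 - r ^ 2) / (r * cos (π * α))) ≤ π / 2 - r * cos (π * α) := by
  have hπα0 : 0 < π * α := mul_pos pi_pos hα0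
  have hπα2 : π * α < π / 2 := by nlinarith [pi_pos]
  have hc : 0 < cos (π * α) := cos_pos_of_mem_Ioo ⟨by linarith, hπα2⟩
  have hc1 : cos (π * α) ≤ 1 := cos_le_one _
  have h1r : (0:ℝ) < 1 - r ^ 2 := by nlinarith
  set s := Real.sqrt (1 - r ^ 2) with hsdef
  have hs : 0 < s := Real.sqrt_pos.mpr h1r
  set c := cos (π * α)
  have hx : 0 < s / (r * c) := div_pos hs (mul_pos hr0 hc)
  have hinv : arctan (s / (r * c))⁻¹ = π / 2 - arctan (s / (r * c)) :=
    Real.arctan_inv_of_pos hx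
  have hinv2 : (s / (r * c))⁻¹ = r * c / s := by
    rw [inv_div]
  -- suffices: r*c ≤ arctan (r*c/s)
  have hrc0 : 0 ≤ r * c := (mul_pos hr0 hc).le
  have hrclt : r * c < π / 2 := by nlinarith [pi_gt_three]
  -- cos r ≥ s
  have hrpi2 : r < π / 2 := by nlinarith [pi_gt_three]
  have hcosr : s ≤ Real.cos r := by
    have h1 : Real.sin r ≤ r := Real.sin_le hr0.le
    have h2 : (0:ℝ) ≤ Real.sin r := Real.sin_nonneg_of_nonneg_of_le_pi hr0.le
      (by nlinarith [pi_gt_three])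
    have h3 : 1 - r ^ 2 ≤ Real.cos r ^ 2 := by
      have := Real.sin_sq_add_cos_sq r
      nlinarith
    calc s ≤ Real.sqrt (Real.cos r ^ 2) := Real.sqrt_le_sqrt h3
      _ = Real.cos r := Real.sqrt_sq (Real.cos_pos_of_mem_Ioo ⟨by linarith, hrpi2⟩).le
  have hcosrc : Real.cos r ≤ Real.cos (r * c) := by
    apply Real.cos_le_cos_of_nonneg_of_le_pi hrc0 (by nlinarith [pi_gt_three])
    nlinarith
  have hcospos : 0 < Real.cos (r * c) := Real.cos_pos_of_mem_Ioo ⟨by linarith, hrclt⟩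
  have htan : Real.tan (r * c) ≤ r * c / s := by
    rw [Real.tan_eq_sin_div_cos]
    apply div_le_div₀ hrc0 (Real.sin_le hrc0) hs
    linarith
  have harc : r * c ≤ arctan (r * c / s) := by
    calc r * c = arctan (Real.tan (r * c)) := (Real.arctan_tan (by linarith) hrclt).symm
      _ ≤ arctan (r * c / s) := Real.arctan_strictMono.monotone htan
  rw [← hinv2, hinv] at harc
  linarith

/-- Lower bound on the fractional spherical area of a wedge: for `0 < α < 1/2`, let
`θ(r) = 2·arctan(tan(πα)·√(1−r²))`, `β(r) = 2r·sin(πα)·arctan(√(1−r²)/(r·cos(πα)))`, and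
`a(r) = (2θ(r) − 2β(r))/(4π)`.  Then for `0 ≤ r ≤ 1`,
`a(r) ≥ α − (r/2)·sin(πα) + (r²/(4π))·sin(2πα)` (the right side being
`a(0) + r·a'(0) + (r²/2)·a''(0)`, valid since `a` is convex). -/
theorem stmt6 (α : ℝ) (hα0 : 0 < α) (hα : α < 1 / 2)
    (θ β a : ℝ → ℝ)
    (hθ : ∀ r, θ r = 2 * arctan (tan (π * α) * Real.sqrt (1 - r ^ 2)))
    (hβ : ∀ r, β r = 2 * r * sin (π * α) *
      arctan (Real.sqrt (1 - r ^ 2) / (r * cos (π * α))))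
    (ha : ∀ r, a r = (2 * θ r - 2 * β r) / (4 * π)) :
    (ConvexOn ℝ (Set.Ioo (0 : ℝ) 1) a) ∧
    ∀ r : ℝ, 0 ≤ r → r ≤ 1 →
      a r ≥ α - r / 2 * sin (π * α) + r ^ 2 / (4 * π) * sin (2 * π * α) := by
  have hπα0 : 0 < π * α := mul_pos pi_pos hα0
  have hπα2 : π * α < π / 2 := by nlinarith [pi_pos]
  have hc : 0 < cos (π * α) := cos_pos_of_mem_Ioo ⟨by linarith, hπα2⟩
  have hS : 0 < sin (π * α) := sin_pos_of_pos_of_lt_pi hπα0 (by linarith [pi_pos])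
  have haF : a = fun r => (2 * (2 * arctan (tan (π * α) * Real.sqrt (1 - r ^ 2))) -
      2 * (2 * r * sin (π * α) * arctan (Real.sqrt (1 - r ^ 2) / (r * cos (π * α))))) / (4 * π) :=
    funext fun r => by rw [ha, hθ, hβ]
  set F : ℝ → ℝ := fun r => (2 * (2 * arctan (tan (π * α) * Real.sqrt (1 - r ^ 2))) -
      2 * (2 * r * sin (π * α) * arctan (Real.sqrt (1 - r ^ 2) / (r * cos (π * α))))) / (4 * π)
    with hFdef
  -- continuity of F on Icc 0 1
  have harctcont : Continuous Real.arctan := Real.continuous_arctan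
  have hθcont : Continuous fun r : ℝ =>
      2 * arctan (tan (π * α) * Real.sqrt (1 - r ^ 2)) :=
    continuous_const.mul (harctcont.comp (continuous_const.mul
      (Real.continuous_sqrt.comp (continuous_const.sub (continuous_pow 2)))))
  have harctnn : ∀ r : ℝ, 0 ≤ r →
      0 ≤ arctan (Real.sqrt (1 - r ^ 2) / (r * cos (π * α))) := by
    intro r hr
    rw [← Real.arctan_zero]
    exact Real.arctan_strictMono.monotone
      (div_nonneg (Real.sqrt_nonneg _) (mul_nonneg hr hc.le))
  have hβcont : ContinuousOn (fun r : ℝ => 2 * r * sin (π * α) *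
      arctan (Real.sqrt (1 - r ^ 2) / (r * cos (π * α)))) (Set.Icc 0 1) := by
    intro x hx
    rcases eq_or_ne x 0 with hx0 | hx0
    · subst hx0
      have hb1 : ∀ r ∈ Set.Icc (0:ℝ) 1, 0 ≤ 2 * r * sin (π * α) *
          arctan (Real.sqrt (1 - r ^ 2) / (r * cos (π * α))) := by
        intro r hr
        have := harctnn r hr.1
        have hr0 := hr.1
        positivity
      have hb2 : ∀ r ∈ Set.Icc (0:ℝ) 1, 2 * r * sin (π * α) *
          arctan (Real.sqrt (1 - r ^ 2) / (r * cos (π * α))) ≤ π * sin (π * α) * r := by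
        intro r hr
        have h1 : arctan (Real.sqrt (1 - r ^ 2) / (r * cos (π * α))) ≤ π / 2 :=
          (Real.arctan_lt_pi_div_two _).le
        have h2 := harctnn r hr.1
        have hr0 := hr.1
        nlinarith [mul_nonneg hr0 hS.le]
      have hb3 : Filter.Tendsto (fun r : ℝ => π * sin (π * α) * r)
          (nhdsWithin 0 (Set.Icc 0 1)) (nhds 0) := by
        have : Filter.Tendsto (fun r : ℝ => π * sin (π * α) * r) (nhds 0)
            (nhds (π * sin (π * α) * 0)) := (continuous_const.mul continuous_id).tendsto 0
        rw [mul_zero] at this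
        exact this.mono_left nhdsWithin_le_nhds
      have key := squeeze_zero' (eventually_nhdsWithin_of_forall hb1)
        (eventually_nhdsWithin_of_forall hb2) hb3
      unfold ContinuousWithinAt
      convert key using 2
      norm_num
    · apply ContinuousAt.continuousWithinAt
      have hx' : x * cos (π * α) ≠ 0 := mul_ne_zero hx0 hc.ne'
      apply ContinuousAt.mul
      · exact (continuous_const.mul continuous_id |>.mul continuous_const).continuousAt
      · apply harctcont.continuousAt.comp
        exact ContinuousAt.div
          ((Real.continuous_sqrt.comp (continuous_const.sub (continuous_pow 2))).continuousAt)
          ((continuous_id.mul continuous_const).continuousAt) hx'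
  have hcontF : ContinuousOn F (Set.Icc 0 1) :=
    ((continuousOn_const.mul hθcont.continuousOn).sub
      (continuousOn_const.mul hβcont)).div_const _
  -- differentiability + deriv formula on Ioo
  have hderivF : ∀ r ∈ Set.Ioo (0:ℝ) 1, deriv F r =
      -(sin (π * α) / π) * arctan (Real.sqrt (1 - r ^ 2) / (r * cos (π * α))) :=
    fun r hr => (wedge_hasDerivAt α hα0 hα hr).deriv
  have hdiffF : ∀ r ∈ Set.Ioo (0:ℝ) 1, DifferentiableAt ℝ F r :=
    fun r hr => (wedge_hasDerivAt α hα0 hα hr).differentiableAt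
  -- monotonicity of deriv F on Ioo
  have hmono : MonotoneOn (deriv F) (Set.Ioo (0:ℝ) 1) := by
    intro x hx y hy hxy
    rw [hderivF x hx, hderivF y hy]
    have hq : Real.sqrt (1 - y ^ 2) / (y * cos (π * α)) ≤
        Real.sqrt (1 - x ^ 2) / (x * cos (π * α)) := by
      apply div_le_div₀ (Real.sqrt_nonneg _) (Real.sqrt_le_sqrt (by nlinarith [hx.1, hy.2]))
        (mul_pos hx.1 hc)
      exact mul_le_mul_of_nonneg_right hxy hc.le
    have := Real.arctan_strictMono.monotone hq
    have hSπ : 0 ≤ sin (π * α) / π := div_nonneg hS.le pi_pos.le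
    nlinarith
  -- convexity
  have hconvex : ConvexOn ℝ (Set.Ioo (0:ℝ) 1) F := by
    apply MonotoneOn.convexOn_of_deriv (convex_Ioo 0 1)
    · exact hcontF.mono (fun x hx => ⟨hx.1.le, hx.2.le⟩)
    · rw [isOpen_Ioo.interior_eq]
      exact fun x hx => (hdiffF x hx).differentiableWithinAt
    · rwa [isOpen_Ioo.interior_eq]
  -- the Taylor polynomial
  set T : ℝ → ℝ := fun r => α - r / 2 * sin (π * α) + r ^ 2 / (4 * π) * sin (2 * π * α)
    with hTdef
  have dT : ∀ r : ℝ, HasDerivAt T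
      (-(1 / 2 * sin (π * α)) + 2 * r / (4 * π) * sin (2 * π * α)) r := by
    intro r
    have h1 : HasDerivAt (fun r : ℝ => r / 2 * sin (π * α)) (1 / 2 * sin (π * α)) r := by
      simpa using ((hasDerivAt_id r).div_const 2).mul_const (sin (π * α))
    have h2 : HasDerivAt (fun r : ℝ => r ^ 2 / (4 * π) * sin (2 * π * α))
        (2 * r / (4 * π) * sin (2 * π * α)) r := by
      have := ((hasDerivAt_pow 2 r).div_const (4 * π)).mul_const (sin (2 * π * α))
      simpa using this
    simpa [Pi.add_def] using (h1.const_sub α).add h2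
  -- h = F - T is monotone on Icc 0 1
  set h : ℝ → ℝ := fun r => F r - T r with hhdef
  have hsin2 : sin (2 * π * α) = 2 * sin (π * α) * cos (π * α) := by
    rw [show 2 * π * α = 2 * (π * α) by ring, Real.sin_two_mul]
  have hmonoh : MonotoneOn h (Set.Icc 0 1) := by
    apply monotoneOn_of_deriv_nonneg (convex_Icc 0 1)
    · exact hcontF.sub ((continuous_const.sub ((continuous_id.div_const 2).mul
        continuous_const)).add (((continuous_pow 2).div_const (4*π)).mul
        continuous_const)).continuousOn
    · rw [interior_Icc]
      exact fun x hx => ((hdiffF x hx).sub (dT x).differentiableAt).differentiableWithinAt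
    · rw [interior_Icc]
      intro x hx
      have hd : HasDerivAt h ((-(sin (π * α) / π) *
          arctan (Real.sqrt (1 - x ^ 2) / (x * cos (π * α)))) -
          (-(1 / 2 * sin (π * α)) + 2 * x / (4 * π) * sin (2 * π * α))) x :=
        (wedge_hasDerivAt α hα0 hα hx).sub (dT x)
      rw [hd.deriv]
      have hkey := wedge_arctan_le α hα0 hα hx.1 hx.2
      rw [hsin2]
      have hSπ : 0 < sin (π * α) / π := div_pos hS pi_pos
      have e1 : 2 * x / (4 * π) * (2 * sin (π * α) * cos (π * α)) =
          sin (π * α) / π * (x * cos (π * α)) := by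
        field_simp
        ring
      rw [e1]
      have e2 : -(sin (π * α) / π) * arctan (Real.sqrt (1 - x ^ 2) / (x * cos (π * α))) ≥
          -(sin (π * α) / π) * (π / 2 - x * cos (π * α)) := by
        have := mul_le_mul_of_nonneg_left hkey hSπ.le
        linarith
      have e3 : -(sin (π * α) / π) * (π / 2 - x * cos (π * α)) =
          -(1 / 2 * sin (π * α)) + sin (π * α) / π * (x * cos (π * α)) := by
        field_simp
        ring
      linarith [e2, e3.symm.le]
  -- value at 0
  have hF0 : F 0 = α := by
    have h0 : Real.sqrt (1 - (0:ℝ) ^ 2) = 1 := by norm_num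
    have : arctan (tan (π * α) * 1) = π * α := by
      rw [mul_one]
      exact Real.arctan_tan (by linarith) hπα2
    simp only [hFdef, h0, this]
    field_simp
    ring
  have hh0 : h 0 = 0 := by
    simp only [hhdef, hTdef, hF0]
    norm_num
  refine ⟨haF ▸ hconvex, fun r hr0 hr1 => ?_⟩
  have := hmonoh (Set.mem_Icc.mpr ⟨le_refl 0, zero_le_one⟩) (Set.mem_Icc.mpr ⟨hr0, hr1⟩) hr0
  rw [hh0] at this
  rw [haF]
  simp only [hhdef, hTdef] at this
  linarith [this]
end

section
/- In the plane, among all angular sectors with fixed opening angle 2πα (0 < α ≤ 1/2) and fixed vertex V at distance r < 1 from the center of the unit circle, the arc length cut from the unit circle is minimized by the sector whose interior does not contain the center and whose bisector ray points away through the center. -/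
open MeasureTheory Real Metric Pointwise

noncomputable section ArcAux
namespace ArcAux


/-- The direction angle of the point at circle-angle `t` minus the vertex. -/
def Ff (r t : ℝ) : ℝ := t + Real.arctan (r * Real.sin t / (1 - r * Real.cos t))

/-- distance from the vertex to the circle point at angle `t`. -/
def Nn (r t : ℝ) : ℝ := Real.sqrt (1 - 2*r*Real.cos t + r^2)

lemma den_pos {r : ℝ} (h0 : 0 ≤ r) (h1 : r < 1) (t : ℝ) : 0 < 1 - r * Real.cos t := by
  nlinarith [Real.cos_le_one t, Real.neg_one_le_cos t]

lemma Nsq_pos {r : ℝ} (h0 : 0 ≤ r) (h1 : r < 1) (t : ℝ) :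
    0 < 1 - 2*r*Real.cos t + r^2 := by
  nlinarith [Real.cos_le_one t, Real.neg_one_le_cos t]

lemma Nn_pos {r : ℝ} (h0 : 0 ≤ r) (h1 : r < 1) (t : ℝ) : 0 < Nn r t :=
  Real.sqrt_pos.2 (Nsq_pos h0 h1 t)

lemma Nn_sq {r : ℝ} (h0 : 0 ≤ r) (h1 : r < 1) (t : ℝ) :
    (Nn r t)^2 = 1 - 2*r*Real.cos t + r^2 :=
  Real.sq_sqrt (Nsq_pos h0 h1 t).le

lemma sqrt_one_add_q_sq {r : ℝ} (h0 : 0 ≤ r) (h1 : r < 1) (t : ℝ) :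
    Real.sqrt (1 + (r * Real.sin t / (1 - r * Real.cos t))^2)
      = Nn r t / (1 - r * Real.cos t) := by
  have hd := den_pos h0 h1 t
  have : 1 + (r * Real.sin t / (1 - r * Real.cos t))^2
      = (Nn r t / (1 - r * Real.cos t))^2 := by
    rw [div_pow, div_pow, Nn_sq h0 h1]
    field_simp
    nlinarith [Real.sin_sq_add_cos_sq t]
  rw [this, Real.sqrt_sq (div_nonneg (Nn_pos h0 h1 t).le hd.le)]

lemma cos_Ff {r : ℝ} (h0 : 0 ≤ r) (h1 : r < 1) (t : ℝ) :
    Real.cos (Ff r t) = (Real.cos t - r) / Nn r t := by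
  have hd := den_pos h0 h1 t
  have hN := Nn_pos h0 h1 t
  have hNsq := Nn_sq h0 h1 t
  rw [Ff, Real.cos_add, Real.cos_arctan, Real.sin_arctan, sqrt_one_add_q_sq h0 h1]
  field_simp
  rw [mul_comm (Real.cos t) r, mul_div_cancel_left₀ _ hd.ne']
  nlinarith [Real.sin_sq_add_cos_sq t]

lemma sin_Ff {r : ℝ} (h0 : 0 ≤ r) (h1 : r < 1) (t : ℝ) :
    Real.sin (Ff r t) = Real.sin t / Nn r t := by
  have hd := den_pos h0 h1 t
  have hN := Nn_pos h0 h1 t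
  have hNsq := Nn_sq h0 h1 t
  rw [Ff, Real.sin_add, Real.cos_arctan, Real.sin_arctan, sqrt_one_add_q_sq h0 h1]
  field_simp
  ring

lemma hasDerivAt_Ff {r : ℝ} (h0 : 0 ≤ r) (h1 : r < 1) (t : ℝ) :
    HasDerivAt (Ff r) ((1 - r*Real.cos t) / (1 - 2*r*Real.cos t + r^2)) t := by
  have hd := den_pos h0 h1 t
  have hQ : HasDerivAt (fun t => r * Real.sin t / (1 - r * Real.cos t))
      ((r * Real.cos t * (1 - r * Real.cos t) - r * Real.sin t * (r * Real.sin t))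
        / (1 - r * Real.cos t)^2) t := by
    have h1' : HasDerivAt (fun t => r * Real.sin t) (r * Real.cos t) t :=
      (Real.hasDerivAt_sin t).const_mul r
    have h2' : HasDerivAt (fun t => 1 - r * Real.cos t) (r * Real.sin t) t := by
      simpa using ((Real.hasDerivAt_cos t).const_mul r).const_sub 1
    exact h1'.div h2' hd.ne'
  have hA := (Real.hasDerivAt_arctan (r * Real.sin t / (1 - r * Real.cos t))).comp t hQ
  have h := (hasDerivAt_id t).add hA
  refine h.congr_deriv ?_
  have hs := Real.sin_sq_add_cos_sq t
  have hNsq := Nsq_pos h0 h1 t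
  have hq : 1 + (r * Real.sin t / (1 - r * Real.cos t))^2
      = (1 - 2*r*Real.cos t + r^2) / (1 - r * Real.cos t)^2 := by
    field_simp
    nlinarith [Real.sin_sq_add_cos_sq t]
  rw [hq, show r * Real.sin t * (r * Real.sin t) = r^2*(1 - Real.cos t^2) by nlinarith [hs]]
  field_simp
  ring

lemma deriv_Ff {r : ℝ} (h0 : 0 ≤ r) (h1 : r < 1) (t : ℝ) :
    deriv (Ff r) t = (1 - r*Real.cos t) / (1 - 2*r*Real.cos t + r^2) :=
  (hasDerivAt_Ff h0 h1 t).deriv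

lemma strictMono_Ff {r : ℝ} (h0 : 0 ≤ r) (h1 : r < 1) : StrictMono (Ff r) := by
  apply strictMono_of_deriv_pos
  intro t
  rw [deriv_Ff h0 h1]
  exact div_pos (den_pos h0 h1 t) (Nsq_pos h0 h1 t)

lemma Ff_neg (r t : ℝ) : Ff r (-t) = - Ff r t := by
  simp [Ff, Real.sin_neg, Real.cos_neg, neg_div, Real.arctan_neg]
  ring

lemma Ff_zero (r : ℝ) : Ff r 0 = 0 := by simp [Ff]

lemma Ff_add_int (r t : ℝ) (k : ℤ) : Ff r (t + k * (2*π)) = Ff r t + k * (2*π) := by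
  have hs : Real.sin (t + k * (2*π)) = Real.sin t := Real.sin_add_int_mul_two_pi t k
  have hc : Real.cos (t + k * (2*π)) = Real.cos t := Real.cos_add_int_mul_two_pi t k
  simp only [Ff, hs, hc]
  ring

lemma Ff_sub_bound (r t : ℝ) : |Ff r t - t| ≤ π / 2 := by
  have h1' := Real.arctan_lt_pi_div_two (r * Real.sin t / (1 - r * Real.cos t))
  have h2' := Real.neg_pi_div_two_lt_arctan (r * Real.sin t / (1 - r * Real.cos t))
  rw [Ff, abs_le]
  constructor <;> [linarith; linarith]

lemma continuous_Ff {r : ℝ} (h0 : 0 ≤ r) (h1 : r < 1) : Continuous (Ff r) := by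
  apply continuous_id.add
  apply Real.continuous_arctan.comp
  exact (continuous_const.mul Real.continuous_sin).div
    (continuous_const.sub (continuous_const.mul Real.continuous_cos))
    (fun t => (den_pos h0 h1 t).ne')

/-- monotonicity of the derivative in `cos t` -/
lemma derivF_mono {r : ℝ} (h0 : 0 ≤ r) (h1 : r < 1) {a b : ℝ}
    (hab : Real.cos a ≤ Real.cos b) :
    (1 - r*Real.cos a) / (1 - 2*r*Real.cos a + r^2)
      ≤ (1 - r*Real.cos b) / (1 - 2*r*Real.cos b + r^2) := by
  rw [div_le_div_iff₀ (Nsq_pos h0 h1 a) (Nsq_pos h0 h1 b)]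
  nlinarith [mul_nonneg (mul_nonneg h0 (sub_nonneg.2 hab)) (by nlinarith : (0:ℝ) ≤ 1 - r^2)]

/-- THE key inequality. -/
lemma key {r : ℝ} (h0 : 0 ≤ r) (h1 : r < 1) {c : ℝ} (hc0 : 0 ≤ c) (hc : c ≤ π/2) (x : ℝ) :
    Ff r (x + 2*c) - Ff r x ≤ Ff r c - Ff r (-c) := by
  set K : ℝ → ℝ := fun y => Ff r (y + c) - Ff r (y - c) with hK
  have hKder : ∀ y : ℝ, HasDerivAt K
      ((1 - r*Real.cos (y+c)) / (1 - 2*r*Real.cos (y+c) + r^2)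
        - (1 - r*Real.cos (y-c)) / (1 - 2*r*Real.cos (y-c) + r^2)) y := by
    intro y
    have h1' := ((hasDerivAt_Ff h0 h1 (y+c)).comp y ((hasDerivAt_id y).add_const c))
    have h2' := ((hasDerivAt_Ff h0 h1 (y-c)).comp y ((hasDerivAt_id y).sub_const c))
    have h := h1'.sub h2'
    simp only [mul_one] at h
    exact h
  have hanti : AntitoneOn K (Set.Icc 0 π) := by
    apply antitoneOn_of_deriv_nonpos (convex_Icc 0 π)
    · exact (Continuous.sub (((continuous_Ff h0 h1)).comp (continuous_id.add continuous_const))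
        (((continuous_Ff h0 h1)).comp (continuous_id.sub continuous_const))).continuousOn
    · intro y _
      exact (hKder y).differentiableAt.differentiableWithinAt
    · intro y hy
      rw [interior_Icc] at hy
      rw [(hKder y).deriv]
      have hcos : Real.cos (y + c) ≤ Real.cos (y - c) := by
        have hid : Real.cos (y+c) - Real.cos (y-c) = -2 * Real.sin y * Real.sin c := by
          rw [Real.cos_add, Real.cos_sub]; ring
        nlinarith [Real.sin_nonneg_of_nonneg_of_le_pi hy.1.le hy.2.le,
          Real.sin_nonneg_of_nonneg_of_le_pi hc0 (by linarith [Real.pi_pos] : c ≤ π)]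
      have := derivF_mono h0 h1 hcos
      linarith
  have hper : ∀ (y : ℝ) (k : ℤ), K (y + k * (2*π)) = K y := by
    intro y k
    simp only [hK]
    rw [show y + k*(2*π) + c = (y+c) + k*(2*π) by ring,
      show y + k*(2*π) - c = (y-c) + k*(2*π) by ring, Ff_add_int, Ff_add_int]
    ring
  have heven : ∀ y : ℝ, K (-y) = K y := by
    intro y
    simp only [hK]
    rw [show -y + c = -(y - c) by ring, show -y - c = -(y+c) by ring, Ff_neg, Ff_neg]
    ring
  have hmain : ∀ y : ℝ, K y ≤ K 0 := by
    intro y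
    have h2pi : (0:ℝ) < 2*π := by positivity
    set z := toIocMod h2pi (-π) y with hz
    obtain ⟨k, hk⟩ : ∃ k : ℤ, y = z + k * (2*π) := by
      obtain ⟨k, hk⟩ : ∃ k : ℤ, y - z = k • (2*π) := ⟨_, (self_sub_toIocMod h2pi (-π) y)⟩
      exact ⟨k, by rw [zsmul_eq_mul] at hk; linarith⟩
    have hmem := toIocMod_mem_Ioc h2pi (-π) y
    rw [← hz] at hmem
    have hz1 : -π < z := hmem.1
    have hz2 : z ≤ π := by have := hmem.2; linarith
    have hKy : K y = K z := by rw [hk, hper]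
    have habs : K z = K |z| := by
      rcases abs_cases z with ⟨h, _⟩ | ⟨h, _⟩
      · rw [h]
      · rw [h, heven]
    rw [hKy, habs]
    have habs2 : |z| ≤ π := abs_le.2 ⟨by linarith, hz2⟩
    exact hanti ⟨le_refl 0, Real.pi_pos.le⟩ ⟨abs_nonneg z, habs2⟩ (abs_nonneg z)
  have h := hmain (x + c)
  simpa [hK, show x + c + c = x + 2*c by ring, show x + c - c = x by ring,
    show (0:ℝ) + c = c by ring, show (0:ℝ) - c = -c by ring] using h


abbrev E2 : Type := EuclideanSpace ℝ (Fin 2)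

lemma norm_sq_E2 (x : E2) : ‖x‖^2 = (x 0)^2 + (x 1)^2 := by
  rw [EuclideanSpace.norm_eq, Real.sq_sqrt (by positivity)]
  simp [Fin.sum_univ_two, sq_abs]

lemma norm_E2 (x : E2) : ‖x‖ = Real.sqrt ((x 0)^2 + (x 1)^2) := by
  rw [EuclideanSpace.norm_eq]
  simp [Fin.sum_univ_two, sq_abs]

lemma inner_E2 (x y : E2) : (inner ℝ x y : ℝ) = x 0 * y 0 + x 1 * y 1 := by
  simp [PiLp.inner_apply, Fin.sum_univ_two, RCLike.inner_apply, mul_comm]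

/-- A point of the plane from coordinates. -/
def pt (a b : ℝ) : E2 := WithLp.toLp 2 ![a, b]

@[simp] lemma pt_zero (a b : ℝ) : pt a b 0 = a := rfl
@[simp] lemma pt_one (a b : ℝ) : pt a b 1 = b := rfl

lemma exists_angle_rep {x : E2} (hx : ‖x‖ = 1) :
    ∃ τ : ℝ, x 0 = Real.cos τ ∧ x 1 = Real.sin τ := by
  have hsq : (x 0)^2 + (x 1)^2 = 1 := by
    have := norm_sq_E2 x; rw [hx] at this; linarith
  set z : ℂ := ⟨x 0, x 1⟩ with hz
  have habs : ‖z‖ = 1 := by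
    simp only [Complex.norm_def, Complex.normSq_mk, hz]
    rw [show x 0 * x 0 + x 1 * x 1 = 1 by nlinarith]
    exact Real.sqrt_one
  have hz0 : z ≠ 0 := by
    intro h; rw [h] at habs; simp at habs
  refine ⟨z.arg, ?_, ?_⟩
  · have := Complex.cos_arg hz0; rw [habs] at this; simpa [hz] using this.symm
  · have := Complex.sin_arg z; rw [habs] at this; simpa [hz] using this.symm

/-- Rotation of the plane by angle `δ`, as a linear isometry equivalence. -/
def rotE (δ : ℝ) : E2 ≃ₗᵢ[ℝ] E2 where
  toLinearEquiv :=
    { toFun := fun x => pt (Real.cos δ * x 0 - Real.sin δ * x 1)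
        (Real.sin δ * x 0 + Real.cos δ * x 1)
      invFun := fun x => pt (Real.cos δ * x 0 + Real.sin δ * x 1)
        (- Real.sin δ * x 0 + Real.cos δ * x 1)
      map_add' := by
        intro x y
        ext i
        fin_cases i <;>
          simp [pt, PiLp.add_apply] <;> ring
      map_smul' := by
        intro c x
        ext i
        fin_cases i <;>
          simp [pt, PiLp.smul_apply, smul_eq_mul] <;> ring
      left_inv := by
        intro x
        ext i
        have h := Real.sin_sq_add_cos_sq δ
        fin_cases i <;> simp [pt] <;>
          [linear_combination (x 0) * h; linear_combination (x 1) * h]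
      right_inv := by
        intro x
        ext i
        have h := Real.sin_sq_add_cos_sq δ
        fin_cases i <;> simp [pt] <;>
          [linear_combination (x 0) * h; linear_combination (x 1) * h] }
  norm_map' := by
    intro x
    simp only [LinearEquiv.coe_mk, LinearMap.coe_mk, AddHom.coe_mk]
    rw [norm_E2, norm_E2]
    congr 1
    have h := Real.sin_sq_add_cos_sq δ
    simp only [pt_zero, pt_one]
    nlinarith [h]

@[simp] lemma rotE_apply_zero (δ : ℝ) (x : E2) :
    rotE δ x 0 = Real.cos δ * x 0 - Real.sin δ * x 1 := rfl
@[simp] lemma rotE_apply_one (δ : ℝ) (x : E2) :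
    rotE δ x 1 = Real.sin δ * x 0 + Real.cos δ * x 1 := rfl

/-- angle ≤ criterion via inner product. -/
lemma angle_le_iff {w u : E2} (hw : w ≠ 0) (hu : ‖u‖ = 1) {b : ℝ}
    (hb0 : 0 ≤ b) (hbπ : b ≤ π) :
    InnerProductGeometry.angle w u ≤ b ↔ ‖w‖ * Real.cos b ≤ (inner ℝ w u : ℝ) := by
  have hwn : 0 < ‖w‖ := norm_pos_iff.2 hw
  have hle : |(inner ℝ w u : ℝ)| ≤ ‖w‖ := by
    have := abs_real_inner_le_norm w u; rw [hu, mul_one] at this; exact this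
  have ht1 : (inner ℝ w u : ℝ) / ‖w‖ ≤ 1 := by
    rw [div_le_one hwn]; exact (abs_le.1 hle).2
  have ht2 : (-1 : ℝ) ≤ (inner ℝ w u : ℝ) / ‖w‖ := by
    rw [neg_le, ← neg_div, div_le_one hwn]
    have := (abs_le.1 hle).1; linarith
  rw [InnerProductGeometry.angle, hu, mul_one]
  constructor
  · intro h
    have hcc : Real.cos b ≤ Real.cos (Real.arccos ((inner ℝ w u : ℝ) / ‖w‖)) :=
      Real.cos_le_cos_of_nonneg_of_le_pi (Real.arccos_nonneg _) hbπ h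
    rw [Real.cos_arccos ht2 ht1] at hcc
    calc ‖w‖ * Real.cos b ≤ ‖w‖ * ((inner ℝ w u : ℝ) / ‖w‖) := by
          exact mul_le_mul_of_nonneg_left hcc hwn.le
      _ = (inner ℝ w u : ℝ) := by field_simp
  · intro h
    have hcb : Real.cos b ≤ (inner ℝ w u : ℝ) / ‖w‖ := by
      rw [le_div_iff₀ hwn]; linarith [h]
    have harc : Real.arccos ((inner ℝ w u : ℝ) / ‖w‖) ≤ Real.arccos (Real.cos b) := by
      rw [Real.arccos_eq_pi_div_two_sub_arcsin, Real.arccos_eq_pi_div_two_sub_arcsin]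
      have := Real.monotone_arcsin hcb
      linarith
    rwa [Real.arccos_cos hb0 hbπ] at harc



/-- rotation induced on the unit sphere -/
def rotS (R : E2 ≃ₗᵢ[ℝ] E2) (p : sphere (0:E2) 1) : sphere (0:E2) 1 :=
  ⟨R p, by
    rw [mem_sphere_zero_iff_norm, R.norm_map]
    exact mem_sphere_zero_iff_norm.1 p.2⟩

lemma continuous_rotS (R : E2 ≃ₗᵢ[ℝ] E2) : Continuous (rotS R) :=
  Continuous.subtype_mk (R.continuous.comp continuous_subtype_val) _

lemma coe_image_rotS_preimage (R : E2 ≃ₗᵢ[ℝ] E2) (B : Set (sphere (0:E2) 1)) :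
    Subtype.val '' (rotS R ⁻¹' B) = ⇑R ⁻¹' (Subtype.val '' B) := by
  ext x
  simp only [Set.mem_image, Set.mem_preimage]
  constructor
  · rintro ⟨p, hp, rfl⟩
    exact ⟨rotS R p, hp, rfl⟩
  · rintro ⟨q, hq, hqx⟩
    have hxs : x ∈ sphere (0:E2) 1 := by
      rw [mem_sphere_zero_iff_norm, ← R.norm_map]
      rw [← hqx]
      exact mem_sphere_zero_iff_norm.1 q.2
    refine ⟨⟨x, hxs⟩, ?_, rfl⟩
    have : rotS R ⟨x, hxs⟩ = q := Subtype.ext hqx.symm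
    show rotS R ⟨x, hxs⟩ ∈ B
    rw [this]; exact hq

lemma smul_preimage_R (R : E2 ≃ₗᵢ[ℝ] E2) (T : Set E2) :
    Set.Ioo (0:ℝ) 1 • (⇑R ⁻¹' T) = ⇑R ⁻¹' (Set.Ioo (0:ℝ) 1 • T) := by
  ext x
  constructor
  · intro hx
    obtain ⟨cc, hcc, y, hy, rfl⟩ := Set.mem_smul.1 hx
    rw [Set.mem_preimage, _root_.map_smul]
    exact Set.smul_mem_smul hcc hy
  · intro hx
    rw [Set.mem_preimage] at hx
    obtain ⟨cc, hcc, z, hz, hzx⟩ := Set.mem_smul.1 hx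
    have hx' : x = cc • R.symm z := by
      apply R.injective
      rw [_root_.map_smul, LinearIsometryEquiv.apply_symm_apply, hzx]
    rw [hx']
    exact Set.smul_mem_smul hcc (by rw [Set.mem_preimage, LinearIsometryEquiv.apply_symm_apply]; exact hz)

lemma volume_preimage_R (R : E2 ≃ₗᵢ[ℝ] E2) (W : Set E2) :
    volume (⇑R ⁻¹' W) = volume W := by
  have h := MeasurableEquiv.map_apply (μ := (volume : Measure E2)) R.toMeasurableEquiv W
  rw [LinearIsometryEquiv.coe_toMeasurableEquiv] at h
  rw [R.measurePreserving.map_eq] at h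
  exact h.symm

lemma toSphere_rotS_preimage (R : E2 ≃ₗᵢ[ℝ] E2) {B : Set (sphere (0:E2) 1)}
    (hB : MeasurableSet B) :
    (volume : Measure E2).toSphere (rotS R ⁻¹' B) = (volume : Measure E2).toSphere B := by
  rw [Measure.toSphere_apply' _ ((continuous_rotS R).measurable hB),
    Measure.toSphere_apply' _ hB, coe_image_rotS_preimage, smul_preimage_R, volume_preimage_R]

lemma sub_V_ne {V : E2} (hVlt : ‖V‖ < 1) {x : E2} (hx : ‖x‖ = 1) : x - V ≠ 0 := by
  intro h
  have h1' : ‖x‖ - ‖V‖ ≤ ‖x - V‖ := norm_sub_norm_le x V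
  rw [h, norm_zero, hx] at h1'
  linarith

lemma norm_sub_V {r γ : ℝ} (h0 : 0 ≤ r) (h1 : r < 1) {τ : ℝ} {x V : E2}
    (hx0 : x 0 = Real.cos τ) (hx1 : x 1 = Real.sin τ)
    (hV0 : V 0 = r * Real.cos γ) (hV1 : V 1 = r * Real.sin γ) :
    ‖x - V‖ = Nn r (τ - γ) := by
  rw [norm_E2, Nn]
  congr 1
  rw [PiLp.sub_apply, PiLp.sub_apply, hx0, hx1, hV0, hV1, Real.cos_sub]
  linear_combination Real.sin_sq_add_cos_sq τ + r^2 * Real.sin_sq_add_cos_sq γ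

lemma inner_sub_V {r γ ψ' : ℝ} (h0 : 0 ≤ r) (h1 : r < 1) {τ : ℝ} {x V w : E2}
    (hx0 : x 0 = Real.cos τ) (hx1 : x 1 = Real.sin τ)
    (hV0 : V 0 = r * Real.cos γ) (hV1 : V 1 = r * Real.sin γ)
    (hw0 : w 0 = Real.cos (γ + ψ')) (hw1 : w 1 = Real.sin (γ + ψ')) :
    (inner ℝ (x - V) w : ℝ) = Nn r (τ - γ) * Real.cos (Ff r (τ - γ) - ψ') := by
  have hN := Nn_pos h0 h1 (τ - γ)
  rw [inner_E2, PiLp.sub_apply, PiLp.sub_apply, hx0, hx1, hV0, hV1, hw0, hw1,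
    Real.cos_sub (Ff r (τ - γ)) ψ', cos_Ff h0 h1, sin_Ff h0 h1,
    Real.cos_add γ ψ', Real.sin_add γ ψ',
    show τ = (τ - γ) + γ by ring, Real.cos_add (τ - γ) γ, Real.sin_add (τ - γ) γ]
  field_simp
  ring_nf
  simp only [mul_inv_cancel_right₀ hN.ne']
  linear_combination (Real.cos (τ-γ) * Real.cos ψ' + Real.sin (τ-γ) * Real.sin ψ'
    - r * Real.cos ψ') * Real.sin_sq_add_cos_sq γ

lemma mem_sector_iff {r γ : ℝ} (h0 : 0 ≤ r) (h1 : r < 1) {V : E2} (hVn : ‖V‖ = r)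
    (hV0 : V 0 = r * Real.cos γ) (hV1 : V 1 = r * Real.sin γ)
    {β : ℝ} (hβ0 : 0 ≤ β) (hβπ : β ≤ π)
    {x w : E2} {τ ψ' : ℝ} (hx : ‖x‖ = 1) (hx0 : x 0 = Real.cos τ) (hx1 : x 1 = Real.sin τ)
    (hw : ‖w‖ = 1) (hw0 : w 0 = Real.cos (γ + ψ')) (hw1 : w 1 = Real.sin (γ + ψ')) :
    InnerProductGeometry.angle (x - V) w ≤ β ↔
      Real.cos β ≤ Real.cos (Ff r (τ - γ) - ψ') := by
  have hxV : x - V ≠ 0 := sub_V_ne (by rw [hVn]; exact h1) hx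
  rw [angle_le_iff hxV hw hβ0 hβπ, norm_sub_V h0 h1 hx0 hx1 hV0 hV1,
    inner_sub_V h0 h1 hx0 hx1 hV0 hV1 hw0 hw1]
  exact mul_le_mul_iff_right₀ (Nn_pos h0 h1 (τ - γ))

end ArcAux

open ArcAux in
/-- Planar arc-length minimization. -/
theorem stmt7 (V : EuclideanSpace ℝ (Fin 2)) (r α : ℝ)
    (hV : V ≠ 0) (hVr : ‖V‖ = r) (hr : r < 1)
    (hα0 : 0 < α) (hα : α ≤ 1 / 2)
    (S : EuclideanSpace ℝ (Fin 2) → Set (EuclideanSpace ℝ (Fin 2)))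
    (hS : ∀ u, S u = {x | InnerProductGeometry.angle (x - V) u ≤ π * α}) :
    ∀ u : EuclideanSpace ℝ (Fin 2), ‖u‖ = 1 →
      (volume : Measure (EuclideanSpace ℝ (Fin 2))).toSphere
          {p : sphere (0 : EuclideanSpace ℝ (Fin 2)) 1 |
            (p : EuclideanSpace ℝ (Fin 2)) ∈ S (‖V‖⁻¹ • V)} ≤
        (volume : Measure (EuclideanSpace ℝ (Fin 2))).toSphere
          {p : sphere (0 : EuclideanSpace ℝ (Fin 2)) 1 |
            (p : EuclideanSpace ℝ (Fin 2)) ∈ S u} := by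
  intro u hu
  have hπ := Real.pi_pos
  have hVnorm : 0 < ‖V‖ := norm_pos_iff.2 hV
  have hr0 : 0 < r := hVr ▸ hVnorm
  have h0r : 0 ≤ r := hr0.le
  set u₀ : EuclideanSpace ℝ (Fin 2) := ‖V‖⁻¹ • V with hu₀def
  have hu₀ : ‖u₀‖ = 1 := by
    rw [hu₀def, norm_smul, norm_inv, norm_norm, inv_mul_cancel₀ hVnorm.ne']
  set β := π * α with hβdef
  have hβ0 : 0 < β := mul_pos hπ hα0
  have hβhalf : β ≤ π/2 := by rw [hβdef]; nlinarith
  have hβπ : β ≤ π := by linarith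
  obtain ⟨γ, hγ0, hγ1⟩ := exists_angle_rep hu₀
  have hV0 : V 0 = r * Real.cos γ := by
    have h : ‖V‖⁻¹ * V 0 = Real.cos γ := by
      rw [← hγ0, hu₀def]; rw [PiLp.smul_apply, smul_eq_mul]
    have h2 : V 0 = ‖V‖ * Real.cos γ := by
      rw [← h]; field_simp
    rw [h2, hVr]
  have hV1 : V 1 = r * Real.sin γ := by
    have h : ‖V‖⁻¹ * V 1 = Real.sin γ := by
      rw [← hγ1, hu₀def]; rw [PiLp.smul_apply, smul_eq_mul]
    have h2 : V 1 = ‖V‖ * Real.sin γ := by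
      rw [← h]; field_simp
    rw [h2, hVr]
  obtain ⟨ν, hν0, hν1⟩ := exists_angle_rep hu
  have h2pi : (0:ℝ) < 2*π := by positivity
  set ψ := toIocMod h2pi (-π) (ν - γ) with hψdef
  have hψmem := toIocMod_mem_Ioc h2pi (-π) (ν - γ)
  rw [← hψdef] at hψmem
  obtain ⟨k₀, hk₀⟩ : ∃ k : ℤ, ν - γ - ψ = k • (2*π) := ⟨_, self_sub_toIocMod h2pi (-π) (ν-γ)⟩
  rw [zsmul_eq_mul] at hk₀
  have hν' : ν = (γ + ψ) + k₀ * (2*π) := by linarith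
  have hu0' : u 0 = Real.cos (γ + ψ) := by rw [hν0, hν', Real.cos_add_int_mul_two_pi]
  have hu1' : u 1 = Real.sin (γ + ψ) := by rw [hν1, hν', Real.sin_add_int_mul_two_pi]
  -- choose `c` with `Ff r c = β`
  obtain ⟨c, hcmem, hcβ⟩ : ∃ c ∈ Set.Icc (0:ℝ) (π/2), Ff r c = β := by
    have hsub := intermediate_value_Icc (by positivity : (0:ℝ) ≤ π/2)
      ((continuous_Ff h0r hr).continuousOn (s := Set.Icc 0 (π/2)))
    have hhalf : Ff r (π/2) = π/2 + Real.arctan r := by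
      simp [Ff]
    have harc : 0 ≤ Real.arctan r := by
      rw [← Real.arctan_zero]
      exact Real.arctan_strictMono.monotone h0r
    have hmem : β ∈ Set.Icc (Ff r 0) (Ff r (π/2)) := by
      constructor
      · rw [Ff_zero]; exact hβ0.le
      · rw [hhalf]; linarith
    obtain ⟨c, hcmem, hc⟩ := hsub hmem
    exact ⟨c, hcmem, hc⟩
  -- choose `A` with `Ff r A = ψ - β`
  obtain ⟨A, hA⟩ : ∃ A : ℝ, Ff r A = ψ - β := by
    set y := ψ - β with hy
    have hsub := intermediate_value_Icc (by linarith : y - π/2 ≤ y + π/2)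
      ((continuous_Ff h0r hr).continuousOn (s := Set.Icc (y - π/2) (y + π/2)))
    have hb1 := abs_le.1 (Ff_sub_bound r (y - π/2))
    have hb2 := abs_le.1 (Ff_sub_bound r (y + π/2))
    have hmem : y ∈ Set.Icc (Ff r (y - π/2)) (Ff r (y + π/2)) := by
      constructor
      · linarith [hb1.2]
      · linarith [hb2.1]
    obtain ⟨A, _, hA⟩ := hsub hmem
    exact ⟨A, hA⟩
  obtain ⟨δ, hδdef⟩ : ∃ δ : ℝ, δ = A + c := ⟨A + c, rfl⟩
  set R := rotE δ with hRdef
  have hmono := strictMono_Ff h0r hr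
  -- the pointwise inclusion
  have hpoint : {p : sphere (0 : EuclideanSpace ℝ (Fin 2)) 1 | (p : EuclideanSpace ℝ (Fin 2)) ∈ S u₀}
      ⊆ rotS R ⁻¹' {p : sphere (0 : EuclideanSpace ℝ (Fin 2)) 1 | (p : EuclideanSpace ℝ (Fin 2)) ∈ S u} := by
    intro p hp
    have hxnorm : ‖(p : E2)‖ = 1 := mem_sphere_zero_iff_norm.1 p.2
    obtain ⟨τ, hx0, hx1⟩ := exists_angle_rep hxnorm
    set θ := τ - γ with hθdef
    -- translate the hypothesis
    have hp' : InnerProductGeometry.angle ((p : E2) - V) u₀ ≤ β := by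
      have := hp
      rw [Set.mem_setOf_eq, hS, Set.mem_setOf_eq] at this
      rw [hβdef]; exact this
    have hγ0' : u₀ 0 = Real.cos (γ + 0) := by rw [add_zero]; exact hγ0
    have hγ1' : u₀ 1 = Real.sin (γ + 0) := by rw [add_zero]; exact hγ1
    have hcosθ : Real.cos β ≤ Real.cos (Ff r θ) := by
      have h := (mem_sector_iff h0r hr hVr hV0 hV1 hβ0.le hβπ hxnorm hx0 hx1 hu₀ hγ0' hγ1').1 hp'
      rw [sub_zero] at h
      exact h
    -- reduce θ to the fundamental arc
    set y := Real.Angle.toReal ((Ff r θ : ℝ) : Real.Angle) with hydef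
    have hyc : ((y : ℝ) : Real.Angle) = ((Ff r θ : ℝ) : Real.Angle) := Real.Angle.coe_toReal _
    obtain ⟨k, hk⟩ := Real.Angle.angle_eq_iff_two_pi_dvd_sub.1 hyc
    set m : ℤ := -k with hmdef
    have hFy : Ff r θ = y + m * (2*π) := by
      push_cast [hmdef]
      linarith
    have hcosy : Real.cos (Ff r θ) = Real.cos y := by
      rw [hFy, Real.cos_add_int_mul_two_pi]
    have hy1 : -π < y := Real.Angle.neg_pi_lt_toReal _
    have hy2 : y ≤ π := Real.Angle.toReal_le_pi _
    have hyabs : |y| ≤ β := by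
      by_contra hcon
      push_neg at hcon
      have h1' : Real.cos |y| < Real.cos β :=
        Real.strictAntiOn_cos ⟨hβ0.le, hβπ⟩ ⟨abs_nonneg y, abs_le.2 ⟨by linarith, hy2⟩⟩ hcon
      rw [Real.cos_abs] at h1'
      rw [hcosy] at hcosθ
      linarith
    set θt := θ - m * (2*π) with hθtdef
    have hFθt : Ff r θt = y := by
      have h := Ff_add_int r θt m
      rw [show θt + (m:ℝ) * (2*π) = θ by rw [hθtdef]; ring] at h
      rw [hFy] at h
      linarith
    have hyβ := abs_le.1 hyabs
    have hθt1 : -c ≤ θt := by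
      have h : Ff r (-c) ≤ Ff r θt := by
        rw [Ff_neg, hcβ, hFθt]; linarith
      exact hmono.le_iff_le.1 h
    have hθt2 : θt ≤ c := by
      have h : Ff r θt ≤ Ff r c := by rw [hcβ, hFθt]; linarith
      exact hmono.le_iff_le.1 h
    -- bound `Ff r (θt + δ)`
    have hF1 : Ff r A ≤ Ff r (θt + δ) := hmono.monotone (by rw [hδdef]; linarith)
    have hF2 : Ff r (θt + δ) ≤ ψ + β := by
      have h1' : Ff r (θt + δ) ≤ Ff r (A + 2*c) := hmono.monotone (by rw [hδdef]; linarith)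
      have h2' := key h0r hr hcmem.1 hcmem.2 A
      rw [hcβ, Ff_neg, hcβ, hA] at h2'
      linarith
    have hwlo : -β ≤ Ff r (θt + δ) - ψ := by rw [hA] at hF1; linarith
    have hwhi : Ff r (θt + δ) - ψ ≤ β := by linarith
    have hcosw : Real.cos β ≤ Real.cos (Ff r (θt + δ) - ψ) := by
      have h := Real.cos_le_cos_of_nonneg_of_le_pi (abs_nonneg (Ff r (θt + δ) - ψ)) hβπ
        (abs_le.2 ⟨hwlo, hwhi⟩)
      rwa [Real.cos_abs] at h
    have hshift : Ff r (θ + δ) = Ff r (θt + δ) + m * (2*π) := by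
      have h := Ff_add_int r (θt + δ) m
      rw [show θt + δ + (m:ℝ) * (2*π) = θ + δ by rw [hθtdef]; ring] at h
      exact h
    have hgoal : Real.cos β ≤ Real.cos (Ff r (θ + δ) - ψ) := by
      rw [hshift, show Ff r (θt + δ) + (m:ℝ) * (2*π) - ψ = (Ff r (θt + δ) - ψ) + (m:ℝ) * (2*π) by ring,
        Real.cos_add_int_mul_two_pi]
      exact hcosw
    -- conclude membership of the rotated point
    have hR0 : (R (p : E2)) 0 = Real.cos (τ + δ) := by
      rw [hRdef, rotE_apply_zero, hx0, hx1, Real.cos_add]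
      ring
    have hR1 : (R (p : E2)) 1 = Real.sin (τ + δ) := by
      rw [hRdef, rotE_apply_one, hx0, hx1, Real.sin_add]
      ring
    have hRnorm : ‖R (p : E2)‖ = 1 := by rw [R.norm_map]; exact hxnorm
    show (↑(rotS R p) : EuclideanSpace ℝ (Fin 2)) ∈ S u
    rw [hS, Set.mem_setOf_eq]
    have hcoe : (↑(rotS R p) : EuclideanSpace ℝ (Fin 2)) = R (p : E2) := rfl
    rw [hcoe]
    refine (mem_sector_iff h0r hr hVr hV0 hV1 hβ0.le hβπ hRnorm hR0 hR1 hu hu0' hu1').2 ?_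
    rw [show τ + δ - γ = θ + δ by rw [hθdef]; ring]
    exact hgoal
  -- measurability of the target set
  have hmeas : MeasurableSet {p : sphere (0 : EuclideanSpace ℝ (Fin 2)) 1 |
      (p : EuclideanSpace ℝ (Fin 2)) ∈ S u} := by
    have hset : {p : sphere (0 : EuclideanSpace ℝ (Fin 2)) 1 |
        (p : EuclideanSpace ℝ (Fin 2)) ∈ S u}
        = {p : sphere (0 : EuclideanSpace ℝ (Fin 2)) 1 |
            ‖(p : E2) - V‖ * Real.cos β ≤ (inner ℝ ((p : E2) - V) u : ℝ)} := by
      ext p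
      have hxnorm : ‖(p : E2)‖ = 1 := mem_sphere_zero_iff_norm.1 p.2
      have hxV : (p : E2) - V ≠ 0 := sub_V_ne (by rw [hVr]; exact hr) hxnorm
      rw [Set.mem_setOf_eq, Set.mem_setOf_eq, hS, Set.mem_setOf_eq,
        angle_le_iff hxV hu hβ0.le hβπ]
    rw [hset]
    apply IsClosed.measurableSet
    apply isClosed_le
    · exact ((continuous_subtype_val.sub continuous_const).norm).mul continuous_const
    · exact Continuous.inner (continuous_subtype_val.sub continuous_const) continuous_const
  calc (volume : Measure (EuclideanSpace ℝ (Fin 2))).toSphere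
        {p : sphere (0 : EuclideanSpace ℝ (Fin 2)) 1 | (p : EuclideanSpace ℝ (Fin 2)) ∈ S u₀}
      ≤ (volume : Measure (EuclideanSpace ℝ (Fin 2))).toSphere
        (rotS R ⁻¹' {p : sphere (0 : EuclideanSpace ℝ (Fin 2)) 1 |
          (p : EuclideanSpace ℝ (Fin 2)) ∈ S u}) := measure_mono hpoint
    _ = _ := toSphere_rotS_preimage R hmeas
end ArcAux
end

section
/- Let α = arccos(1/3)/(2π). Then for all integer pairs (c,w) with 0 ≤ c, 1 ≤ w, c + w ≤ 5, we have αw + c/2 ≠ 1. -/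
open Real

lemma cos_two_pi_div_five : Real.cos (2 * π / 5) = (Real.sqrt 5 - 1) / 4 := by
  have h : (2 : ℝ) * π / 5 = 2 * (π / 5) := by ring
  rw [h, Real.cos_two_mul, Real.cos_pi_div_five]
  have h5 : Real.sqrt 5 ^ 2 = 5 := Real.sq_sqrt (by norm_num)
  nlinarith [h5]

lemma arccos_third_lt : arccos (1 / 3) < 2 * π / 5 := by
  have hpi := Real.pi_pos
  have h1 : Real.cos (2 * π / 5) < Real.cos (arccos (1 / 3)) := by
    rw [Real.cos_arccos (by norm_num) (by norm_num), cos_two_pi_div_five]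
    have h5 : Real.sqrt 5 ^ 2 = 5 := Real.sq_sqrt (by norm_num)
    nlinarith [Real.sqrt_nonneg 5]
  have ha : arccos (1 / 3) ∈ Set.Icc 0 π :=
    ⟨Real.arccos_nonneg _, Real.arccos_le_pi _⟩
  have hb : 2 * π / 5 ∈ Set.Icc 0 π := by
    constructor <;> nlinarith
  exact (Real.strictAntiOn_cos.lt_iff_gt hb ha).mp h1

lemma lt_arccos_third : π / 3 < arccos (1 / 3) := by
  have hpi := Real.pi_pos
  have h1 : Real.cos (arccos (1 / 3)) < Real.cos (π / 3) := by
    rw [Real.cos_arccos (by norm_num) (by norm_num), Real.cos_pi_div_three]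
    norm_num
  have ha : arccos (1 / 3) ∈ Set.Icc 0 π :=
    ⟨Real.arccos_nonneg _, Real.arccos_le_pi _⟩
  have hb : π / 3 ∈ Set.Icc 0 π := by
    constructor <;> nlinarith
  exact (Real.strictAntiOn_cos.lt_iff_gt ha hb).mp h1

/-- With `α = arccos(1/3)/(2π)`: for all integers `c ≥ 0`, `w ≥ 1` with `c + w ≤ 5`,
we have `αw + c/2 ≠ 1`. -/
theorem stmt9 (α : ℝ) (hα : α = arccos (1 / 3) / (2 * π)) :
    ∀ c w : ℕ, 1 ≤ w → c + w ≤ 5 → α * w + c / 2 ≠ 1 := by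
  intro c w hw hcw heq
  have hpi := Real.pi_pos
  have hne : (2 : ℝ) * π ≠ 0 := by positivity
  -- A * w = (2 - c) * π
  have hkey : arccos (1 / 3) * w = (2 - (c : ℝ)) * π := by
    rw [hα] at heq
    field_simp at heq
    nlinarith [heq]
  have hl := lt_arccos_third
  have hu := arccos_third_lt
  have hw1 : (1 : ℝ) ≤ (w : ℝ) := by exact_mod_cast hw
  -- π/3 * w < (2-c)π < 2π/5 * w
  have h1 : π / 3 * w < (2 - (c : ℝ)) * π := by
    rw [← hkey]; nlinarith
  have h2 : (2 - (c : ℝ)) * π < 2 * π / 5 * w := by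
    rw [← hkey]; nlinarith
  -- divide out π
  have h1' : (w : ℝ) + 3 * c < 6 := by nlinarith
  have h2' : (10 : ℝ) < 2 * w + 5 * c := by nlinarith
  have h1n : w + 3 * c < 6 := by exact_mod_cast h1'
  have h2n : 10 < 2 * w + 5 * c := by exact_mod_cast h2'
  omega
end

section
/- arccos(1/3) is not a rational multiple of π. -/
open Real

private def tseq : ℕ → ℤ
  | 0 => 1
  | 1 => 1
  | (n+2) => 2 * tseq (n+1) - 9 * tseq n

private lemma tseq_eq (θ : ℝ) (hθ : Real.cos θ = 1/3) :
    ∀ n : ℕ, (tseq n : ℝ) = 3 ^ n * Real.cos (n * θ) := by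
  intro n
  induction n using Nat.strong_induction_on with
  | _ n ih =>
    match n with
    | 0 => simp [tseq]
    | 1 => simp [tseq, hθ]
    | (n+2) =>
      have h1 := ih (n+1) (by omega)
      have h0 := ih n (by omega)
      have key : Real.cos ((n+2) * θ) = 2 * Real.cos θ * Real.cos ((n+1) * θ) - Real.cos (n * θ) := by
        have := Real.cos_add ((n+1) * θ) θ
        have := Real.cos_sub ((n+1) * θ) θ
        have e1 : ((n:ℝ)+2) * θ = (n+1) * θ + θ := by ring
        have e2 : (n:ℝ) * θ = (n+1) * θ - θ := by ring
        rw [e1, e2, Real.cos_add, Real.cos_sub]; ring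
      have : (tseq (n+2) : ℝ) = 2 * (tseq (n+1) : ℝ) - 9 * (tseq n : ℝ) := by
        have e : tseq (n+2) = 2 * tseq (n+1) - 9 * tseq n := rfl
        rw [e]; push_cast; ring
      rw [this, h1, h0]
      push_cast
      rw [key, hθ]
      ring

private lemma tseq_not_dvd : ∀ n : ℕ, ¬ (3 : ℤ) ∣ tseq (n+1) := by
  intro n
  induction n with
  | zero => decide
  | succ n ih =>
    intro h
    apply ih
    have e : tseq (n+1+1) = 2 * tseq (n+1) - 9 * tseq n := rfl
    omega

/-- `arccos(1/3)` (the dihedral angle of the regular tetrahedron) is not a rational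
multiple of `π`. -/
theorem stmt10 : ¬ ∃ q : ℚ, arccos (1 / 3) = (q : ℝ) * π := by
  rintro ⟨q, hq⟩
  set θ := arccos (1/3) with hθdef
  have hcos : Real.cos θ = 1/3 := by
    rw [hθdef, Real.cos_arccos (by norm_num) (by norm_num)]
  set n := 2 * q.den with hn
  have hcn : Real.cos (n * θ) = 1 := by
    rw [hq]
    have : (n : ℝ) * ((q:ℝ) * π) = (2 * q.num : ℤ) * π := by
      have hden : ((q.den : ℝ)) * (q : ℝ) = (q.num : ℝ) := by
        rw [Rat.cast_def]
        field_simp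
      push_cast [hn]
      linear_combination 2 * π * hden
    rw [this]
    have e : ((2 * q.num : ℤ) : ℝ) * π = (q.num : ℤ) * (2 * π) := by push_cast; ring
    rw [e]
    exact Real.cos_int_mul_two_pi q.num
  have heq : (tseq n : ℝ) = 3 ^ n := by
    rw [tseq_eq θ hcos n, hcn, mul_one]
  have hz : tseq n = 3 ^ n := by exact_mod_cast heq
  have hpos : 1 ≤ n := by have := q.pos; omega
  obtain ⟨m, hm⟩ : ∃ m, n = m + 1 := ⟨n - 1, by omega⟩
  apply tseq_not_dvd m
  rw [← hm, hz]
  exact dvd_pow_self 3 (by omega)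
end

section
/- Let α = arccos(1/3)/(2π) and γ = 0.304. Then 8α + 7·(−γ/(2√3) + √2·γ²/(6π)) > 1. -/
open Real

/-- Numeric inequality underlying "at most seven wedges": with `α = arccos(1/3)/(2π)` and
`γ = 0.304`, we have `8α + 7·(−γ/(2√3) + √2·γ²/(6π)) > 1`. -/
theorem stmt13 (α γ : ℝ) (hα : α = arccos (1 / 3) / (2 * π)) (hγ : γ = 0.304) :
    8 * α + 7 * (-(γ / (2 * Real.sqrt 3)) + Real.sqrt 2 * γ ^ 2 / (6 * π)) > 1 := by
  have hπl : (3.141592 : ℝ) < π := Real.pi_gt_d6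
  have hπu : π < 3.141593 := Real.pi_lt_d6
  have hπ0 : (0 : ℝ) < π := Real.pi_pos
  have h2 : (1.4142 : ℝ) ≤ Real.sqrt 2 := by
    rw [show (2 : ℝ) = 1.4142 ^ 2 + 0.00003836 by norm_num]
    nlinarith [Real.sq_sqrt (show (0:ℝ) ≤ 1.4142 ^ 2 + 0.00003836 by norm_num),
      Real.sqrt_nonneg ((1.4142:ℝ) ^ 2 + 0.00003836)]
  have h3 : (1.732 : ℝ) ≤ Real.sqrt 3 := by
    nlinarith [Real.sq_sqrt (show (0:ℝ) ≤ 3 by norm_num), Real.sqrt_nonneg (3:ℝ)]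
  have h30 : (0 : ℝ) < Real.sqrt 3 := by linarith
  -- sin 0.3409 ≥ 1/3
  have hc : (1 / 3 : ℝ) ≤ Real.sin 0.3409 := by
    have hb := Real.sin_bound (x := (0.3409 : ℝ)) (by rw [abs_of_pos (by norm_num)]; norm_num)
    rw [abs_of_pos (show (0:ℝ) < 0.3409 by norm_num)] at hb
    have hb' := (abs_le.mp hb).1
    nlinarith [hb']
  -- arcsin (1/3) ≤ 0.3409
  have harc : Real.arcsin (1 / 3) ≤ 0.3409 := by
    rw [Real.arcsin_le_iff_le_sin (Set.mem_Icc.mpr ⟨by norm_num, by norm_num⟩)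
      (Set.mem_Icc.mpr ⟨by linarith, by linarith⟩)]
    exact hc
  have hA : π / 2 - 0.3409 ≤ Real.arccos (1 / 3) := by
    rw [Real.arccos_eq_pi_div_two_sub_arcsin]
    linarith
  -- bound each term
  have e1 : (1.56595 : ℝ) ≤ 8 * α := by
    rw [hα, show 8 * (Real.arccos (1/3) / (2 * π)) = 8 * Real.arccos (1/3) / (2 * π) by ring,
      le_div_iff₀ (by positivity)]
    nlinarith
  have e2 : γ / (2 * Real.sqrt 3) ≤ 0.08776 := by
    rw [hγ, div_le_iff₀ (by positivity)]
    nlinarith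
  have e3 : (0.006933 : ℝ) ≤ Real.sqrt 2 * γ ^ 2 / (6 * π) := by
    rw [hγ, le_div_iff₀ (by positivity)]
    nlinarith
  linarith
end

section
/- Let B be the unit ball, W₀ a centered wedge of angle 2πα = arccos(1/3) (edge through the center), and W any other wedge or cap in B (intersection of B with at most two half-spaces) with interior disjoint from W₀ and not containing the center. Then vol(W₀ ∪ W)/vol(B) ≤ α + 1/2, with equality achievable, so the minimum missing volume fraction for a centered wedge plus one more wedge is exactly 1/2 − α. -/
open MeasureTheory Real Metric
open Set

lemma polar_img_vol (s : Set (ℝ × ℝ)) (hs : MeasurableSet s) (hsub : s ⊆ polarCoord.target) :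
    volume (polarCoord.symm '' s) = ∫⁻ p in s, ENNReal.ofReal p.1 := by
  set B : ℝ × ℝ → ℝ × ℝ →L[ℝ] ℝ × ℝ := fun p =>
    LinearMap.toContinuousLinearMap (Matrix.toLin (Module.Basis.finTwoProd ℝ) (Module.Basis.finTwoProd ℝ)
      !![Real.cos p.2, -p.1 * Real.sin p.2; Real.sin p.2, p.1 * Real.cos p.2])
  have B_det : ∀ p, (B p).det = p.1 := by
    intro p
    conv_rhs => rw [← one_mul p.1, ← cos_sq_add_sin_sq p.2]
    simp only [B, neg_mul, LinearMap.det_toContinuousLinearMap, LinearMap.det_toLin,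
      Matrix.det_fin_two_of, sub_neg_eq_add]
    ring
  have hinj : Set.InjOn polarCoord.symm s := by
    have := polarCoord.symm.injOn
    rw [OpenPartialHomeomorph.symm_source] at this
    exact this.mono hsub
  calc volume (polarCoord.symm '' s) = ∫⁻ x in polarCoord.symm '' s, 1 := (setLIntegral_one _).symm
    _ = ∫⁻ p in s, ENNReal.ofReal |(B p).det| * 1 :=
        lintegral_image_eq_lintegral_abs_det_fderiv_mul volume hs
          (fun p _ => (hasFDerivAt_polarCoord_symm p).hasFDerivWithinAt) hinj 1
    _ = ∫⁻ p in s, ENNReal.ofReal p.1 := by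
        apply setLIntegral_congr_fun hs
        intro p hp
        beta_reduce
        rw [B_det, mul_one, abs_of_pos (hsub hp).1]

lemma rect_lintegral (R : ℝ) (hR : 0 ≤ R) (E : Set ℝ) (hE : MeasurableSet E) :
    ∫⁻ p in Ioc 0 R ×ˢ E, ENNReal.ofReal p.1 = ENNReal.ofReal (R ^ 2 / 2) * volume E := by
  rw [Measure.volume_eq_prod, ← Measure.prod_restrict]
  rw [lintegral_prod _ (by fun_prop)]
  simp only [lintegral_const, Measure.restrict_apply_univ]
  rw [lintegral_mul_const _ (by fun_prop)]
  congr 1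
  rw [← ofReal_integral_eq_lintegral_ofReal]
  · rw [← intervalIntegral.integral_of_le hR, integral_id]
    norm_num
  · exact (intervalIntegral.intervalIntegrable_id.1).mono_set (by intro x h; exact h)
  · exact (ae_restrict_iff' measurableSet_Ioc).2 (ae_of_all _ fun z hz => hz.1.le)

lemma region_vol (A : Set (ℝ × ℝ)) (r : ℝ) (hr : 0 ≤ r) (E : Set ℝ) (hE : MeasurableSet E)
    (hEsub : E ⊆ Ioo (-π) π)
    (h1 : polarCoord.symm '' (Ioc 0 (Real.sqrt r) ×ˢ E) ⊆ A)
    (h2 : ∀ p ∈ A, p.2 ≠ 0 → p ∈ polarCoord.symm '' (Ioc 0 (Real.sqrt r) ×ˢ E)) :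
    volume A = ENNReal.ofReal (r / 2) * volume E := by
  have hrect : MeasurableSet (Ioc 0 (Real.sqrt r) ×ˢ E) := measurableSet_Ioc.prod hE
  have hsub : (Ioc 0 (Real.sqrt r) ×ˢ E) ⊆ polarCoord.target := by
    rintro ⟨ρ, φ⟩ ⟨h₁, h₂⟩
    exact ⟨h₁.1, hEsub h₂⟩
  have key : volume (polarCoord.symm '' (Ioc 0 (Real.sqrt r) ×ˢ E))
      = ENNReal.ofReal (r / 2) * volume E := by
    rw [polar_img_vol _ hrect hsub, rect_lintegral _ (Real.sqrt_nonneg r) E hE, Real.sq_sqrt hr]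
  have hnull : volume {p : ℝ × ℝ | p.2 = 0} = 0 := by
    have : {p : ℝ × ℝ | p.2 = 0} = (Set.univ : Set ℝ) ×ˢ ({0} : Set ℝ) := by
      ext ⟨a, b⟩; simp [eq_comm]
    rw [this, Measure.volume_eq_prod, Measure.prod_prod, Real.volume_singleton, mul_zero]
  rw [← key]
  refine le_antisymm ?_ (measure_mono h1)
  calc volume A ≤ volume (polarCoord.symm '' (Ioc 0 (Real.sqrt r) ×ˢ E) ∪ {p : ℝ × ℝ | p.2 = 0}) := by
        apply measure_mono
        intro p hp
        by_cases hp2 : p.2 = 0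
        · exact Or.inr hp2
        · exact Or.inl (h2 p hp hp2)
    _ ≤ volume (polarCoord.symm '' (Ioc 0 (Real.sqrt r) ×ˢ E)) + volume {p : ℝ × ℝ | p.2 = 0} :=
        measure_union_le _ _
    _ = volume (polarCoord.symm '' (Ioc 0 (Real.sqrt r) ×ˢ E)) := by rw [hnull, add_zero]

lemma mem_target_angle {ρ φ : ℝ} (hρ : 0 < ρ) (hφl : -π < φ) (hφr : φ < π)
    {θ : ℝ} (hθ : 0 < θ) (hθ' : θ ≤ π / 2)
    (hb : 0 ≤ ρ * Real.sin φ) (hc : Real.cos θ * (ρ * Real.sin φ) ≤ Real.sin θ * (ρ * Real.cos φ)) :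
    0 ≤ φ ∧ φ ≤ θ := by
  have hπ := Real.pi_pos
  have hsin : 0 ≤ Real.sin φ := nonneg_of_mul_nonneg_right hb hρ
  constructor
  · by_contra hlt
    push_neg at hlt
    exact absurd hsin (not_le.2 (Real.sin_neg_of_neg_of_neg_pi_lt hlt hφl))
  · by_contra hlt
    push_neg at hlt
    have h1 : Real.sin (θ - φ) < 0 :=
      Real.sin_neg_of_neg_of_neg_pi_lt (by linarith) (by linarith)
    rw [Real.sin_sub] at h1
    nlinarith

lemma sector_vol (θ : ℝ) (hθ : 0 < θ) (hθ' : θ ≤ π / 2) (r : ℝ) :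
    volume {p : ℝ × ℝ | p.1 ^ 2 + p.2 ^ 2 ≤ r ∧ 0 ≤ p.2 ∧ Real.cos θ * p.2 ≤ Real.sin θ * p.1}
      = ENNReal.ofReal (r * θ / 2) := by
  have hπ := Real.pi_pos
  rcases le_or_gt r 0 with h | h
  · rcases lt_or_eq_of_le h with h' | h'
    · have hempty : {p : ℝ × ℝ | p.1 ^ 2 + p.2 ^ 2 ≤ r ∧ 0 ≤ p.2 ∧
          Real.cos θ * p.2 ≤ Real.sin θ * p.1} = ∅ := by
        ext p; simp only [Set.mem_setOf_eq, Set.mem_empty_iff_false, iff_false]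
        rintro ⟨h1, -, -⟩; nlinarith [sq_nonneg p.1, sq_nonneg p.2]
      rw [hempty, measure_empty, ENNReal.ofReal_eq_zero.2 (by nlinarith)]
    · subst h'
      have hsub : {p : ℝ × ℝ | p.1 ^ 2 + p.2 ^ 2 ≤ 0 ∧ 0 ≤ p.2 ∧
          Real.cos θ * p.2 ≤ Real.sin θ * p.1} ⊆ {((0 : ℝ), (0 : ℝ))} := by
        rintro p ⟨h1, -, -⟩
        have : p.1 = 0 ∧ p.2 = 0 := by
          constructor <;> nlinarith [sq_nonneg p.1, sq_nonneg p.2]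
        simp [Set.mem_singleton_iff, Prod.ext_iff, this.1, this.2]
      refine le_antisymm ?_ (by simp)
      calc volume _ ≤ volume ({((0 : ℝ), (0 : ℝ))} : Set (ℝ × ℝ)) := measure_mono hsub
        _ = 0 := by
            have : ({((0 : ℝ), (0 : ℝ))} : Set (ℝ × ℝ)) = ({0} : Set ℝ) ×ˢ ({0} : Set ℝ) := by
              ext ⟨a, b⟩; simp [Prod.ext_iff]
            rw [this, Measure.volume_eq_prod, Measure.prod_prod, Real.volume_singleton, mul_zero]
        _ = ENNReal.ofReal (0 * θ / 2) := by simp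
  · have hsθ : 0 < Real.sin θ := Real.sin_pos_of_pos_of_lt_pi hθ (by linarith)
    have hcθ : 0 ≤ Real.cos θ := Real.cos_nonneg_of_mem_Icc ⟨by linarith, hθ'⟩
    rw [region_vol _ r h.le (Icc 0 θ) measurableSet_Icc
        (fun φ hφ => ⟨by linarith [hφ.1], by linarith [hφ.2]⟩) ?_ ?_]
    · rw [Real.volume_Icc, ← ENNReal.ofReal_mul (by positivity)]
      congr 1; ring
    · rintro p ⟨⟨ρ, φ⟩, ⟨hρ, hφ⟩, rfl⟩
      simp only [polarCoord_symm_apply, Set.mem_setOf_eq]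
      have hρ2 : ρ ^ 2 ≤ r := by nlinarith [Real.sq_sqrt h.le, hρ.1, hρ.2]
      have hsφ : 0 ≤ Real.sin φ :=
        Real.sin_nonneg_of_nonneg_of_le_pi hφ.1 (by linarith [hφ.2])
      have hstφ : 0 ≤ Real.sin (θ - φ) :=
        Real.sin_nonneg_of_nonneg_of_le_pi (by linarith [hφ.2]) (by linarith [hφ.1])
      rw [Real.sin_sub] at hstφ
      refine ⟨by nlinarith [Real.sin_sq_add_cos_sq φ], mul_nonneg hρ.1.le hsφ, by nlinarith [hρ.1]⟩
    · rintro p ⟨h1, h2, h3⟩ hp2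
      have hsrc : p ∈ polarCoord.source := Or.inr hp2
      have htgt := polarCoord.map_source hsrc
      have hinv := polarCoord.left_inv hsrc
      refine ⟨polarCoord p, ⟨⟨htgt.1, ?_⟩, ?_⟩, hinv⟩
      · show (polarCoord p).1 ≤ Real.sqrt r
        have : (polarCoord p).1 = Real.sqrt (p.1 ^ 2 + p.2 ^ 2) := rfl
        rw [this]
        exact Real.sqrt_le_sqrt h1
      · obtain ⟨hq1, hq2⟩ := htgt
        set q := polarCoord p with hq
        have hps : p.1 = q.1 * Real.cos q.2 ∧ p.2 = q.1 * Real.sin q.2 := by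
          rw [polarCoord_symm_apply] at hinv
          exact ⟨(congrArg Prod.fst hinv).symm, (congrArg Prod.snd hinv).symm⟩
        have := mem_target_angle hq1 hq2.1 hq2.2 hθ hθ' (hps.2 ▸ h2)
          (by rw [← hps.1, ← hps.2]; exact h3)
        exact ⟨this.1, this.2⟩

lemma disk_vol (r : ℝ) :
    volume {p : ℝ × ℝ | p.1 ^ 2 + p.2 ^ 2 ≤ r} = ENNReal.ofReal (π * r) := by
  have hπ := Real.pi_pos
  rcases le_or_gt r 0 with h | h
  · have hsub : {p : ℝ × ℝ | p.1 ^ 2 + p.2 ^ 2 ≤ r} ⊆ (Set.univ : Set ℝ) ×ˢ ({0} : Set ℝ) := by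
      rintro p h1
      simp only [Set.mem_setOf_eq] at h1
      have : p.2 = 0 := by nlinarith [sq_nonneg p.1, sq_nonneg p.2]
      simp only [Set.mem_prod, Set.mem_univ, Set.mem_singleton_iff, true_and]
      exact this
    have h0 : volume {p : ℝ × ℝ | p.1 ^ 2 + p.2 ^ 2 ≤ r} ≤ 0 := by
      calc volume _ ≤ volume ((Set.univ : Set ℝ) ×ˢ ({0} : Set ℝ)) := measure_mono hsub
        _ = 0 := by rw [Measure.volume_eq_prod, Measure.prod_prod, Real.volume_singleton, mul_zero]
    rw [le_antisymm h0 zero_le, eq_comm, ENNReal.ofReal_eq_zero]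
    nlinarith
  · rw [region_vol _ r h.le (Ioo (-π) π) measurableSet_Ioo subset_rfl ?_ ?_]
    · rw [Real.volume_Ioo, ← ENNReal.ofReal_mul (by positivity)]
      congr 1; ring
    · rintro p ⟨⟨ρ, φ⟩, ⟨hρ, hφ⟩, rfl⟩
      simp only [polarCoord_symm_apply, Set.mem_setOf_eq]
      have hρ2 : ρ ^ 2 ≤ r := by nlinarith [Real.sq_sqrt h.le, hρ.1, hρ.2]
      nlinarith [Real.sin_sq_add_cos_sq φ]
    · rintro p h1 hp2
      have hsrc : p ∈ polarCoord.source := Or.inr hp2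
      have htgt := polarCoord.map_source hsrc
      have hinv := polarCoord.left_inv hsrc
      refine ⟨polarCoord p, ⟨⟨htgt.1, ?_⟩, htgt.2⟩, hinv⟩
      show (polarCoord p).1 ≤ Real.sqrt r
      exact Real.sqrt_le_sqrt h1

lemma zint (c : ℝ) (hc : 0 ≤ c) :
    ∫⁻ z : ℝ, ENNReal.ofReal ((1 - z ^ 2) * c) = ENNReal.ofReal (4 / 3 * c) := by
  have h1 : ∀ z : ℝ, ENNReal.ofReal ((1 - z ^ 2) * c)
      = (Icc (-1 : ℝ) 1).indicator (fun z => ENNReal.ofReal ((1 - z ^ 2) * c)) z := by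
    intro z
    by_cases hz : z ∈ Icc (-1 : ℝ) 1
    · rw [Set.indicator_of_mem hz]
    · rw [Set.indicator_of_notMem hz, ENNReal.ofReal_eq_zero]
      simp only [Set.mem_Icc, not_and, not_le] at hz
      have hz2 : 1 ≤ z ^ 2 := by
        rcases le_or_gt (-1 : ℝ) z with h | h
        · nlinarith [hz h]
        · nlinarith
      exact mul_nonpos_iff.2 (Or.inr ⟨by linarith, hc⟩)
  rw [lintegral_congr h1,
    lintegral_indicator measurableSet_Icc, ← ofReal_integral_eq_lintegral_ofReal]
  · congr 1
    rw [integral_Icc_eq_integral_Ioc, ← intervalIntegral.integral_of_le (by norm_num : (-1:ℝ) ≤ 1),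
      intervalIntegral.integral_mul_const,
      intervalIntegral.integral_sub intervalIntegrable_const
        (intervalIntegral.intervalIntegrable_pow 2),
      intervalIntegral.integral_const, integral_pow]
    norm_num
  · exact ((continuous_const.sub (continuous_pow 2)).mul continuous_const).integrableOn_Icc
  · exact (ae_restrict_iff' measurableSet_Icc).2 (ae_of_all _ fun z hz => by
      simp only [Pi.zero_apply]
      exact mul_nonneg (by nlinarith [hz.1, hz.2]) hc)

lemma T_mp : MeasurePreserving
    (fun x : EuclideanSpace ℝ (Fin 3) => ((x 2, (x 0, x 1)) : ℝ × (ℝ × ℝ))) volume volume := by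
  have h1 := EuclideanSpace.volume_preserving_symm_measurableEquiv_toLp (Fin 3)
  have h2 := MeasureTheory.volume_preserving_piFinSuccAbove (fun _ : Fin 3 => ℝ) 2
  have h3 := (MeasurePreserving.id (volume : Measure ℝ)).prod
    (MeasureTheory.volume_preserving_finTwoArrow ℝ)
  have h := (h3.comp h2).comp h1
  have heq : ((Prod.map id MeasurableEquiv.finTwoArrow) ∘
      (MeasurableEquiv.piFinSuccAbove (fun _ : Fin 3 => ℝ) 2)) ∘
      (MeasurableEquiv.toLp 2 (Fin 3 → ℝ)).symm
      = fun x : EuclideanSpace ℝ (Fin 3) => ((x 2, (x 0, x 1)) : ℝ × (ℝ × ℝ)) := by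
    funext x
    simp only [Function.comp_apply, MeasurableEquiv.piFinSuccAbove_apply, Prod.map_apply,
      MeasurableEquiv.finTwoArrow_apply, id_eq]
    rfl
  rw [heq] at h
  exact h

lemma slice_vol (s : Set (ℝ × (ℝ × ℝ))) (hs : MeasurableSet s) (c : ℝ) (hc : 0 ≤ c)
    (hslice : ∀ z : ℝ, volume (Prod.mk z ⁻¹' s) = ENNReal.ofReal ((1 - z ^ 2) * c)) :
    volume s = ENNReal.ofReal (4 / 3 * c) := by
  rw [Measure.volume_eq_prod, Measure.prod_apply hs]
  simp_rw [hslice]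
  exact zint c hc

lemma norm_le_one_iff (x : EuclideanSpace ℝ (Fin 3)) :
    x ∈ closedBall (0 : EuclideanSpace ℝ (Fin 3)) 1 ↔ x 0 ^ 2 + x 1 ^ 2 + x 2 ^ 2 ≤ 1 := by
  rw [mem_closedBall_zero_iff, EuclideanSpace.norm_eq, Real.sqrt_le_iff]
  simp only [Real.norm_eq_abs, sq_abs, Fin.sum_univ_three, one_pow]
  exact ⟨fun h => h.2, fun h => ⟨zero_le_one, h⟩⟩

lemma vol_ball3 :
    volume (closedBall (0 : EuclideanSpace ℝ (Fin 3)) 1) = ENNReal.ofReal (4 * π / 3) := by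
  have hπ := Real.pi_pos
  set sB : Set (ℝ × (ℝ × ℝ)) := {q | q.2.1 ^ 2 + q.2.2 ^ 2 + q.1 ^ 2 ≤ 1} with hsB_def
  have hsB : MeasurableSet sB := measurableSet_le (by fun_prop) measurable_const
  have hpre : closedBall (0 : EuclideanSpace ℝ (Fin 3)) 1
      = (fun x : EuclideanSpace ℝ (Fin 3) => ((x 2, (x 0, x 1)) : ℝ × (ℝ × ℝ))) ⁻¹' sB := by
    ext x
    rw [norm_le_one_iff]
    simp only [Set.mem_preimage, hsB_def, Set.mem_setOf_eq]
  rw [hpre, T_mp.measure_preimage hsB.nullMeasurableSet]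
  rw [slice_vol sB hsB π hπ.le ?_]
  · congr 1; ring
  · intro z
    have : Prod.mk z ⁻¹' sB = {p : ℝ × ℝ | p.1 ^ 2 + p.2 ^ 2 ≤ 1 - z ^ 2} := by
      ext p
      simp only [Set.mem_preimage, hsB_def, Set.mem_setOf_eq]
      constructor <;> intro h <;> linarith
    rw [this, disk_vol]
    congr 1; ring

lemma vol_wedge (θ : ℝ) (hθ : 0 < θ) (hθ' : θ ≤ π / 2) :
    volume {x : EuclideanSpace ℝ (Fin 3) | x ∈ closedBall (0 : EuclideanSpace ℝ (Fin 3)) 1 ∧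
      0 ≤ x 1 ∧ Real.cos θ * x 1 ≤ Real.sin θ * x 0} = ENNReal.ofReal (2 * θ / 3) := by
  set sW : Set (ℝ × (ℝ × ℝ)) := {q | q.2.1 ^ 2 + q.2.2 ^ 2 + q.1 ^ 2 ≤ 1} ∩
    ({q | 0 ≤ q.2.2} ∩ {q | Real.cos θ * q.2.2 ≤ Real.sin θ * q.2.1}) with hsW_def
  have hsW : MeasurableSet sW := by
    refine MeasurableSet.inter (measurableSet_le (by fun_prop) measurable_const)
      (MeasurableSet.inter (measurableSet_le measurable_const (by fun_prop))
        (measurableSet_le (by fun_prop) (by fun_prop)))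
  have hpre : {x : EuclideanSpace ℝ (Fin 3) | x ∈ closedBall (0 : EuclideanSpace ℝ (Fin 3)) 1 ∧
      0 ≤ x 1 ∧ Real.cos θ * x 1 ≤ Real.sin θ * x 0}
      = (fun x : EuclideanSpace ℝ (Fin 3) => ((x 2, (x 0, x 1)) : ℝ × (ℝ × ℝ))) ⁻¹' sW := by
    ext x
    simp only [Set.mem_setOf_eq, Set.mem_preimage, hsW_def, norm_le_one_iff,
      Set.mem_inter_iff]
  rw [hpre, T_mp.measure_preimage hsW.nullMeasurableSet]
  rw [slice_vol sW hsW (θ / 2) (by positivity) ?_]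
  · congr 1; ring
  · intro z
    have : Prod.mk z ⁻¹' sW = {p : ℝ × ℝ | p.1 ^ 2 + p.2 ^ 2 ≤ 1 - z ^ 2 ∧ 0 ≤ p.2 ∧
        Real.cos θ * p.2 ≤ Real.sin θ * p.1} := by
      ext p
      simp only [Set.mem_preimage, hsW_def, Set.mem_setOf_eq, Set.mem_inter_iff]
      constructor <;> rintro ⟨h1, h2⟩ <;> exact ⟨by linarith, h2⟩
    rw [this, sector_vol θ hθ hθ']
    congr 1; ring

lemma exist_iff (θ : ℝ) (hθ : 0 < θ) (hθ' : θ ≤ π / 2) (a b : ℝ) :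
    (∃ ρ φ : ℝ, 0 ≤ ρ ∧ 0 ≤ φ ∧ φ ≤ θ ∧ a = ρ * Real.cos φ ∧ b = ρ * Real.sin φ) ↔
      (0 ≤ b ∧ Real.cos θ * b ≤ Real.sin θ * a) := by
  have hπ := Real.pi_pos
  have hsθ : 0 < Real.sin θ := Real.sin_pos_of_pos_of_lt_pi hθ (by linarith)
  have hcθ : 0 ≤ Real.cos θ := Real.cos_nonneg_of_mem_Icc ⟨by linarith, hθ'⟩
  constructor
  · rintro ⟨ρ, φ, hρ, hφ0, hφθ, rfl, rfl⟩
    have hsφ : 0 ≤ Real.sin φ := Real.sin_nonneg_of_nonneg_of_le_pi hφ0 (by linarith)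
    have hstφ : 0 ≤ Real.sin (θ - φ) :=
      Real.sin_nonneg_of_nonneg_of_le_pi (by linarith) (by linarith)
    rw [Real.sin_sub] at hstφ
    exact ⟨mul_nonneg hρ hsφ, by nlinarith⟩
  · rintro ⟨hb, hc⟩
    by_cases h0 : a = 0 ∧ b = 0
    · exact ⟨0, 0, le_refl 0, le_refl 0, hθ.le, by simp [h0.1], by simp [h0.2]⟩
    · have ha : 0 ≤ a := by
        by_contra hlt
        push_neg at hlt
        nlinarith
      have hρpos : 0 < a ^ 2 + b ^ 2 := by
        rcases (not_and_or.1 h0) with h | h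
        · positivity
        · positivity
      set ρ := Real.sqrt (a ^ 2 + b ^ 2) with hρ_def
      have hρ : 0 < ρ := Real.sqrt_pos.2 hρpos
      have hbρ : b ≤ ρ := by
        rw [hρ_def]
        exact (Real.le_sqrt hb (by positivity)).2 (by nlinarith)
      have hbρ1 : b / ρ ≤ 1 := by
        rw [div_le_one hρ]; exact hbρ
      have hbρ0 : 0 ≤ b / ρ := div_nonneg hb hρ.le
      set φ := Real.arcsin (b / ρ) with hφ_def
      have hsφ : Real.sin φ = b / ρ := Real.sin_arcsin (by linarith) hbρ1
      have hcφ : Real.cos φ = a / ρ := by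
        rw [hφ_def, Real.cos_arcsin]
        have h1 : 1 - (b / ρ) ^ 2 = (a / ρ) ^ 2 := by
          field_simp
          nlinarith [Real.sq_sqrt hρpos.le]
        rw [h1, Real.sqrt_sq (by positivity)]
      have hφ0 : 0 ≤ φ := Real.arcsin_nonneg.2 hbρ0
      have hφ2 : φ ≤ π / 2 := Real.arcsin_le_pi_div_two _
      have hφθ : φ ≤ θ := by
        by_contra hlt
        push_neg at hlt
        have h1 : Real.sin (θ - φ) < 0 :=
          Real.sin_neg_of_neg_of_neg_pi_lt (by linarith) (by linarith)
        rw [Real.sin_sub, hsφ, hcφ] at h1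
        have h2 := mul_neg_of_neg_of_pos h1 hρ
        have h3 : (Real.sin θ * (a / ρ) - Real.cos θ * (b / ρ)) * ρ
            = Real.sin θ * a - Real.cos θ * b := by field_simp
        rw [h3] at h2
        linarith
      exact ⟨ρ, φ, hρ.le, hφ0, hφθ, by rw [hcφ]; field_simp, by rw [hsφ]; field_simp⟩

lemma hyperplane_null (n : EuclideanSpace ℝ (Fin 3)) (hn : n ≠ 0) :
    volume {x : EuclideanSpace ℝ (Fin 3) | (inner ℝ n x : ℝ) = 0} = 0 := by
  have : {x : EuclideanSpace ℝ (Fin 3) | (inner ℝ n x : ℝ) = 0}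
      = ((LinearMap.ker (innerSL ℝ n : EuclideanSpace ℝ (Fin 3) →ₗ[ℝ] ℝ) : Submodule ℝ (EuclideanSpace ℝ (Fin 3))) : Set (EuclideanSpace ℝ (Fin 3))) := by
    ext x
    simp [LinearMap.mem_ker]
  rw [this]
  apply Measure.addHaar_submodule
  intro h
  have hn2 : (inner ℝ n n : ℝ) = 0 := by
    have : n ∈ LinearMap.ker (innerSL ℝ n : EuclideanSpace ℝ (Fin 3) →ₗ[ℝ] ℝ) := by rw [h]; trivial
    simpa using this
  exact hn (inner_self_eq_zero.1 hn2)

lemma halfball_vol (n : EuclideanSpace ℝ (Fin 3)) (hn : n ≠ 0) :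
    volume ({x : EuclideanSpace ℝ (Fin 3) | (inner ℝ n x : ℝ) ≤ 0} ∩
      closedBall (0 : EuclideanSpace ℝ (Fin 3)) 1) = ENNReal.ofReal (2 * π / 3) := by
  have hπ := Real.pi_pos
  set Hp := {x : EuclideanSpace ℝ (Fin 3) | (inner ℝ n x : ℝ) ≤ 0} ∩
    closedBall (0 : EuclideanSpace ℝ (Fin 3)) 1 with hHp
  set Hm := {x : EuclideanSpace ℝ (Fin 3) | (0 : ℝ) ≤ inner ℝ n x} ∩
    closedBall (0 : EuclideanSpace ℝ (Fin 3)) 1 with hHm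
  have hneg : Hm = -Hp := by
    ext x
    simp only [hHp, hHm, Set.mem_neg, Set.mem_inter_iff, Set.mem_setOf_eq,
      mem_closedBall_zero_iff, inner_neg_right, norm_neg]
    constructor
    · rintro ⟨h1, h2⟩; exact ⟨by linarith, h2⟩
    · rintro ⟨h1, h2⟩; exact ⟨by linarith, h2⟩
  have hvol_eq : volume Hm = volume Hp := by rw [hneg, Measure.measure_neg]
  have hunion : Hp ∪ Hm = closedBall (0 : EuclideanSpace ℝ (Fin 3)) 1 := by
    ext x
    simp only [hHp, hHm, Set.mem_union, Set.mem_inter_iff, Set.mem_setOf_eq]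
    constructor
    · rintro (⟨-, h⟩ | ⟨-, h⟩) <;> exact h
    · intro h
      rcases le_total (inner ℝ n x : ℝ) 0 with h' | h'
      · exact Or.inl ⟨h', h⟩
      · exact Or.inr ⟨h', h⟩
  have hinter : volume (Hp ∩ Hm) = 0 := by
    refine measure_mono_null ?_ (hyperplane_null n hn)
    rintro x ⟨⟨h1, -⟩, ⟨h2, -⟩⟩
    exact le_antisymm h1 h2
  have hmeas_m : MeasurableSet Hm := by
    refine MeasurableSet.inter ?_ measurableSet_closedBall
    exact measurableSet_le measurable_const (continuous_const.inner continuous_id).measurable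
  have hsum : volume Hp + volume Hm = ENNReal.ofReal (4 * π / 3) := by
    rw [← vol_ball3, ← hunion, ← measure_union_add_inter Hp hmeas_m, hinter, add_zero]
  rw [hvol_eq, ← two_mul] at hsum
  have h2 : ENNReal.ofReal (4 * π / 3) = 2 * ENNReal.ofReal (2 * π / 3) := by
    rw [show (2 : ENNReal) = ENNReal.ofReal 2 by simp, ← ENNReal.ofReal_mul (by norm_num)]
    congr 1; ring
  rw [h2] at hsum
  exact (ENNReal.mul_right_inj (by norm_num) (by norm_num)).1 hsum

lemma open_neg_coord (U : Set (EuclideanSpace ℝ (Fin 3))) (hU : IsOpen U)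
    (h : U ⊆ {x | x 1 ≤ 0}) : U ⊆ {x | x 1 < 0} := by
  intro x hx
  obtain ⟨ε, hε, hball⟩ := Metric.isOpen_iff.1 hU x hx
  set y : EuclideanSpace ℝ (Fin 3) := x + EuclideanSpace.single 1 (ε / 2) with hy_def
  have hy : y ∈ ball x ε := by
    rw [mem_ball_iff_norm, hy_def, add_sub_cancel_left, EuclideanSpace.norm_single]
    rw [Real.norm_eq_abs, abs_of_pos (by linarith)]
    linarith
  have hy1 : y 1 ≤ 0 := h (hball hy)
  have : y 1 = x 1 + ε / 2 := by
    rw [hy_def]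
    simp [EuclideanSpace.single_apply]
  simp only [Set.mem_setOf_eq]
  linarith [this ▸ hy1]

/-- Let `B` be the closed unit ball in `ℝ³`, `α = arccos(1/3)/(2π)`, and `W₀` the centered
wedge of dihedral angle `2πα = arccos(1/3)` with edge along the third coordinate axis
(polar angle of the first two coordinates in `[0, arccos(1/3)]`).  For every `W` which is
the intersection of `B` with at most two closed half-spaces, whose interior is disjoint
from `W₀` and does not contain the center, `vol(W₀ ∪ W) ≤ (α + 1/2)·vol(B)`; moreover
equality is achieved by some such `W`.  Hence the minimum missing volume fraction for a
centered wedge plus one more wedge or cap is exactly `1/2 − α`. -/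
theorem stmt16 (α : ℝ) (hα : α = arccos (1 / 3) / (2 * π))
    (B W₀ : Set (EuclideanSpace ℝ (Fin 3)))
    (hB : B = closedBall (0 : EuclideanSpace ℝ (Fin 3)) 1)
    (hW₀ : W₀ = {x : EuclideanSpace ℝ (Fin 3) | x ∈ B ∧
      ∃ ρ φ : ℝ, 0 ≤ ρ ∧ 0 ≤ φ ∧ φ ≤ arccos (1 / 3) ∧
        x 0 = ρ * cos φ ∧ x 1 = ρ * sin φ}) :
    (∀ (n₁ n₂ : EuclideanSpace ℝ (Fin 3)) (c₁ c₂ : ℝ)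
        (W : Set (EuclideanSpace ℝ (Fin 3))),
      W = {x | inner ℝ n₁ x ≤ c₁} ∩ {x | inner ℝ n₂ x ≤ c₂} ∩ B →
      Disjoint (interior W) W₀ →
      (0 : EuclideanSpace ℝ (Fin 3)) ∉ interior W →
      volume (W₀ ∪ W) ≤ ENNReal.ofReal ((α + 1 / 2) * (4 * π / 3))) ∧
    (∃ (n₁ n₂ : EuclideanSpace ℝ (Fin 3)) (c₁ c₂ : ℝ)
        (W : Set (EuclideanSpace ℝ (Fin 3))),
      W = {x | inner ℝ n₁ x ≤ c₁} ∩ {x | inner ℝ n₂ x ≤ c₂} ∩ B ∧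
      Disjoint (interior W) W₀ ∧
      (0 : EuclideanSpace ℝ (Fin 3)) ∉ interior W ∧
      volume (W₀ ∪ W) = ENNReal.ofReal ((α + 1 / 2) * (4 * π / 3))) := by
  have hπ := Real.pi_pos
  set θ := arccos (1 / 3) with hθ_def
  have hθpos : 0 < θ := Real.arccos_pos.2 (by norm_num)
  have hθhalf : θ ≤ π / 2 := Real.arccos_le_pi_div_two.2 (by norm_num)
  have hW₀' : W₀ = {x : EuclideanSpace ℝ (Fin 3) |
      x ∈ closedBall (0 : EuclideanSpace ℝ (Fin 3)) 1 ∧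
      0 ≤ x 1 ∧ Real.cos θ * x 1 ≤ Real.sin θ * x 0} := by
    rw [hW₀, hB]
    ext x
    simp only [Set.mem_setOf_eq]
    exact and_congr_right fun _ => exist_iff θ hθpos hθhalf (x 0) (x 1)
  have hvolW₀ : volume W₀ = ENNReal.ofReal (2 * θ / 3) := by
    rw [hW₀']; exact vol_wedge θ hθpos hθhalf
  have harith : (α + 1 / 2) * (4 * π / 3) = 2 * θ / 3 + 2 * π / 3 := by
    rw [hα]
    field_simp
    ring
  have hfinal : ∀ W : Set (EuclideanSpace ℝ (Fin 3)),
      volume W ≤ ENNReal.ofReal (2 * π / 3) →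
      volume (W₀ ∪ W) ≤ ENNReal.ofReal ((α + 1 / 2) * (4 * π / 3)) := by
    intro W hle
    calc volume (W₀ ∪ W) ≤ volume W₀ + volume W := measure_union_le _ _
      _ ≤ ENNReal.ofReal (2 * θ / 3) + ENNReal.ofReal (2 * π / 3) :=
          add_le_add (le_of_eq hvolW₀) hle
      _ = ENNReal.ofReal (2 * θ / 3 + 2 * π / 3) :=
          (ENNReal.ofReal_add (by linarith) (by linarith)).symm
      _ = ENNReal.ofReal ((α + 1 / 2) * (4 * π / 3)) := by rw [harith]
  constructor
  · intro n₁ n₂ c₁ c₂ W hW hdisj h0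
    by_cases hA : n₁ ≠ 0 ∧ c₁ ≤ 0
    · refine hfinal W ?_
      calc volume W ≤ volume ({x : EuclideanSpace ℝ (Fin 3) | (inner ℝ n₁ x : ℝ) ≤ 0} ∩
            closedBall (0 : EuclideanSpace ℝ (Fin 3)) 1) := by
            apply measure_mono
            rw [hW, hB]
            rintro x ⟨⟨hx1, hx2⟩, hx3⟩
            exact ⟨le_trans hx1 hA.2, hx3⟩
        _ = ENNReal.ofReal (2 * π / 3) := halfball_vol n₁ hA.1
    by_cases hB' : n₂ ≠ 0 ∧ c₂ ≤ 0
    · refine hfinal W ?_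
      calc volume W ≤ volume ({x : EuclideanSpace ℝ (Fin 3) | (inner ℝ n₂ x : ℝ) ≤ 0} ∩
            closedBall (0 : EuclideanSpace ℝ (Fin 3)) 1) := by
            apply measure_mono
            rw [hW, hB]
            rintro x ⟨⟨hx1, hx2⟩, hx3⟩
            exact ⟨le_trans hx2 hB'.2, hx3⟩
        _ = ENNReal.ofReal (2 * π / 3) := halfball_vol n₂ hB'.1
    by_cases hC : n₁ = 0 ∧ c₁ < 0
    · refine hfinal W ?_
      have : W = ∅ := by
        rw [hW]
        ext x
        simp only [Set.mem_inter_iff, Set.mem_setOf_eq, Set.mem_empty_iff_false, iff_false]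
        rintro ⟨⟨hx1, -⟩, -⟩
        rw [hC.1, inner_zero_left] at hx1
        linarith [hC.2]
      rw [this, measure_empty]
      exact zero_le
    by_cases hD : n₂ = 0 ∧ c₂ < 0
    · refine hfinal W ?_
      have : W = ∅ := by
        rw [hW]
        ext x
        simp only [Set.mem_inter_iff, Set.mem_setOf_eq, Set.mem_empty_iff_false, iff_false]
        rintro ⟨⟨-, hx2⟩, -⟩
        rw [hD.1, inner_zero_left] at hx2
        linarith [hD.2]
      rw [this, measure_empty]
      exact zero_le
    · exfalso
      apply h0
      have hmemint : ∀ (n : EuclideanSpace ℝ (Fin 3)) (c : ℝ), ¬(n ≠ 0 ∧ c ≤ 0) →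
          ¬(n = 0 ∧ c < 0) →
          (0 : EuclideanSpace ℝ (Fin 3)) ∈ interior {x : EuclideanSpace ℝ (Fin 3) |
            (inner ℝ n x : ℝ) ≤ c} := by
        intro n c h1 h2
        by_cases hn : n = 0
        · have hc : 0 ≤ c := by
            by_contra hcc
            exact h2 ⟨hn, lt_of_not_ge hcc⟩
          have : {x : EuclideanSpace ℝ (Fin 3) | (inner ℝ n x : ℝ) ≤ c} = Set.univ := by
            ext x
            simp [hn, inner_zero_left, hc]
          rw [this, interior_univ]
          trivial
        · have hc : 0 < c := by
            by_contra hcc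
            push_neg at hcc
            exact h1 ⟨hn, hcc⟩
          have hsub : {x : EuclideanSpace ℝ (Fin 3) | (inner ℝ n x : ℝ) < c} ⊆
              {x : EuclideanSpace ℝ (Fin 3) | (inner ℝ n x : ℝ) ≤ c} :=
              Set.setOf_subset_setOf.2 fun x hx => le_of_lt hx
          have hopen : IsOpen {x : EuclideanSpace ℝ (Fin 3) | (inner ℝ n x : ℝ) < c} :=
            isOpen_lt (continuous_const.inner continuous_id) continuous_const
          exact interior_maximal hsub hopen (by simp [inner_zero_right, hc])
      rw [hW, hB, interior_inter, interior_inter]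
      refine ⟨⟨hmemint n₁ c₁ hA hC, hmemint n₂ c₂ hB' hD⟩, ?_⟩
      rw [interior_closedBall (0 : EuclideanSpace ℝ (Fin 3)) one_ne_zero]
      exact mem_ball_self zero_lt_one
  · set n : EuclideanSpace ℝ (Fin 3) := EuclideanSpace.single 1 (1 : ℝ) with hn_def
    have hn : n ≠ 0 := by
      intro h
      rw [hn_def] at h
      simpa [EuclideanSpace.single_apply] using congrArg (· 1) h
    have hinner : ∀ x : EuclideanSpace ℝ (Fin 3), (inner ℝ n x : ℝ) = x 1 := by
      intro x
      rw [hn_def]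
      simp [EuclideanSpace.inner_single_left]
    set W : Set (EuclideanSpace ℝ (Fin 3)) :=
      {x | (inner ℝ n x : ℝ) ≤ 0} ∩ {x | (inner ℝ n x : ℝ) ≤ 0} ∩ B with hW_def
    have hWeq : W = {x : EuclideanSpace ℝ (Fin 3) | (inner ℝ n x : ℝ) ≤ 0} ∩
        closedBall (0 : EuclideanSpace ℝ (Fin 3)) 1 := by
      rw [hW_def, Set.inter_self, hB]
    have hWsub : W ⊆ {x : EuclideanSpace ℝ (Fin 3) | x 1 ≤ 0} := by
      rw [hWeq]
      rintro x ⟨hx1, -⟩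
      rw [Set.mem_setOf_eq, ← hinner x]
      exact hx1
    have hintsub : interior W ⊆ {x : EuclideanSpace ℝ (Fin 3) | x 1 < 0} :=
      open_neg_coord _ isOpen_interior (interior_subset.trans hWsub)
    have hW₀sub : W₀ ⊆ {x : EuclideanSpace ℝ (Fin 3) | 0 ≤ x 1} := by
      rw [hW₀']
      rintro x ⟨-, hx, -⟩
      exact hx
    refine ⟨n, n, 0, 0, W, rfl, ?_, ?_, ?_⟩
    · rw [Set.disjoint_left]
      intro x hx hx'
      have h1 := hintsub hx
      have h2 := hW₀sub hx'
      simp only [Set.mem_setOf_eq] at h1 h2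
      linarith
    · intro h
      have := hintsub h
      simp only [Set.mem_setOf_eq] at this
      norm_num at this
    · have hWmeas : MeasurableSet W := by
        rw [hWeq]
        exact (measurableSet_le (continuous_const.inner continuous_id).measurable
          measurable_const).inter measurableSet_closedBall
      have hinter0 : volume (W₀ ∩ W) = 0 := by
        refine measure_mono_null ?_ (hyperplane_null n hn)
        rintro x ⟨hx1, hx2⟩
        have h1 := hW₀sub hx1
        have h2 := hWsub hx2
        simp only [Set.mem_setOf_eq] at h1 h2 ⊢
        rw [hinner x]
        linarith
      have hvW : volume W = ENNReal.ofReal (2 * π / 3) := by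
        rw [hWeq]
        exact halfball_vol n hn
      rw [measure_union₀ hWmeas.nullMeasurableSet hinter0, hvolW₀, hvW,
        ← ENNReal.ofReal_add (by linarith) (by linarith), harith]
end
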